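/- Let f : S^1 → ℝ be a non-constant continuous circle mapping. Then the upper box dimension of the real tree T(f) equals the variation index of f: ubd T(f) = I(f). -/

import Mathlib

open Set Filter Metric Topology
open scoped ENNReal NNReal

noncomputable section

/-- A partition of `[0,1]` with `n+1` points `0 ≤ x₀ < x₁ < ⋯ < xₙ ≤ 1`. -/
def IsPartition (n : ℕ) (x : Fin (n + 1) → ℝ) : Prop :=
  StrictMono x ∧ ∀ i, x i ∈ Set.Icc (0 : ℝ) 1

/-- The variational sum `∑ |f(xᵢ) - f(xᵢ₊₁)|^p` of `f` along a partition. -/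
def varSum (f : ℝ → ℝ) (p : ℝ) (n : ℕ) (x : Fin (n + 1) → ℝ) : ℝ :=
  ∑ i : Fin n, |f (x i.castSucc) - f (x i.succ)| ^ p

/-- The `p`-variation `V^p(f)` of `f` over `[0,1]`. -/
def pVar (f : ℝ → ℝ) (p : ℝ) : ℝ≥0∞ :=
  ⨆ (n : ℕ) (x : Fin (n + 1) → ℝ) (_ : IsPartition n x), ENNReal.ofReal (varSum f p n x)

/-- The variation index `I(f) = sup {p ≥ 1 | V^p(f) = ∞}` (with `sup ∅ = 1`). -/
def varIndex (f : ℝ → ℝ) : ℝ≥0∞ :=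
  1 ⊔ ⨆ (p : ℝ) (_ : 1 ≤ p) (_ : pVar f p = ⊤), ENNReal.ofReal p

/-- The `(p,r)`-variation `V_r^p(f)`: the supremum of variational sums over partitions
all of whose increments satisfy `|f(xᵢ) - f(xᵢ₊₁)| = r`. -/
def prVar (f : ℝ → ℝ) (p r : ℝ) : ℝ≥0∞ :=
  ⨆ (n : ℕ) (x : Fin (n + 1) → ℝ) (_ : IsPartition n x)
    (_ : ∀ i : Fin n, |f (x i.castSucc) - f (x i.succ)| = r),
    ENNReal.ofReal (varSum f p n x)

/-- The upper variation content `V̄^p(f) = limsup_{r→0⁺} V_r^p(f)`. -/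
def uVarContent (f : ℝ → ℝ) (p : ℝ) : ℝ≥0∞ :=
  limsup (fun r => prVar f p r) (𝓝[>] (0 : ℝ))

/-- The lower variation content `V̲^p(f) = liminf_{r→0⁺} V_r^p(f)`. -/
def lVarContent (f : ℝ → ℝ) (p : ℝ) : ℝ≥0∞ :=
  liminf (fun r => prVar f p r) (𝓝[>] (0 : ℝ))

/-- The upper variation index `Ī(f) = sup {p ≥ 1 | V̄^p(f) = ∞}` (with `sup ∅ = 1`). -/
def upperVarIndex (f : ℝ → ℝ) : ℝ≥0∞ :=
  1 ⊔ ⨆ (p : ℝ) (_ : 1 ≤ p) (_ : uVarContent f p = ⊤), ENNReal.ofReal p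

/-- The lower variation index `I̲(f) = sup {p ≥ 1 | V̲^p(f) = ∞}` (with `sup ∅ = 1`). -/
def lowerVarIndex (f : ℝ → ℝ) : ℝ≥0∞ :=
  1 ⊔ ⨆ (p : ℝ) (_ : 1 ≤ p) (_ : lVarContent f p = ⊤), ENNReal.ofReal p

/-- The tree pseudometric `d_f(x,y) = f x + f y - 2 min_{[x∧y, x∨y]} f`. -/
def treeDist (f : ℝ → ℝ) (x y : ℝ) : ℝ :=
  f x + f y - 2 * sInf (f '' Set.uIcc x y)

/-- The maximal cardinality of an `r`-separated subset of `A` with respect to the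
(pseudo)distance `d`. -/
def Nsep {X : Type*} (d : X → X → ℝ) (A : Set X) (r : ℝ) : ℕ :=
  sSup {n | ∃ s : Finset X, (s : Set X) ⊆ A ∧ s.card = n ∧
    ∀ x ∈ s, ∀ y ∈ s, x ≠ y → r < d x y}

/-- Upper box dimension associated with a counting function `N`. -/
def ubdOf (N : ℝ → ℕ) : ℝ≥0∞ :=
  limsup (fun r : ℝ => ENNReal.ofReal (Real.log (N r : ℝ) / (-Real.log r))) (𝓝[>] (0 : ℝ))

/-- Lower box dimension associated with a counting function `N`. -/
def lbdOf (N : ℝ → ℕ) : ℝ≥0∞ :=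
  liminf (fun r : ℝ => ENNReal.ofReal (Real.log (N r : ℝ) / (-Real.log r))) (𝓝[>] (0 : ℝ))

/-- Upper box dimension of the real tree `T(g)` of an excursion `g`, computed through
`r`-separated subsets of `([0,1], d_g)` (these correspond exactly to `r`-separated subsets
of the metric quotient `T(g)`). -/
def ubdTree (g : ℝ → ℝ) : ℝ≥0∞ := ubdOf (fun r => Nsep (treeDist g) (Set.Icc 0 1) r)

/-- Lower box dimension of the real tree `T(g)` of an excursion `g`. -/
def lbdTree (g : ℝ → ℝ) : ℝ≥0∞ := lbdOf (fun r => Nsep (treeDist g) (Set.Icc 0 1) r)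

/-- The modified upper box dimension of the real tree `T(g)`:
the infimum over countable covers of `sup_i ubd`. -/
def umbdTree (g : ℝ → ℝ) : ℝ≥0∞ :=
  ⨅ (U : ℕ → Set ℝ) (_ : Set.Icc (0 : ℝ) 1 ⊆ ⋃ i, U i),
    ⨆ i, ubdOf (fun r => Nsep (treeDist g) (U i ∩ Set.Icc 0 1) r)

/-- The graph `Γ(g) = {(x, g x) | x ∈ [0,1]} ⊆ ℝ²`. -/
def graphSet (g : ℝ → ℝ) : Set (ℝ × ℝ) := {q | ∃ x ∈ Set.Icc (0 : ℝ) 1, q = (x, g x)}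

/-- Upper box dimension of the graph of `g` over `[0,1]`. -/
def ubdGraph (g : ℝ → ℝ) : ℝ≥0∞ :=
  ubdOf (fun r => Nsep (fun u v : ℝ × ℝ => dist u v) (graphSet g) r)

/-- `τ : ℝ → ℝ` is a lift of a homeomorphism of the circle `S¹ = ℝ/ℤ`. -/
def IsCircleHomeoLift (τ : ℝ → ℝ) : Prop :=
  Continuous τ ∧ Function.Bijective τ ∧
    ((∀ x, τ (x + 1) = τ x + 1) ∨ (∀ x, τ (x + 1) = τ x - 1))

end

noncomputable section PicardAux

/-- Indices of partition increments of size `> s`. -/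
def bigSet (h : ℝ → ℝ) (s : ℝ) (n : ℕ) (x : Fin (n + 1) → ℝ) : Finset (Fin n) :=
  Finset.univ.filter fun i => s < |h (x i.castSucc) - h (x i.succ)|

def bigCount (h : ℝ → ℝ) (s : ℝ) (n : ℕ) (x : Fin (n + 1) → ℝ) : ℕ := (bigSet h s n x).card

def DmaxSet (h : ℝ → ℝ) (s : ℝ) : Set ℕ :=
  {K | ∃ n x, IsPartition n x ∧ K = bigCount h s n x}

def Dmax (h : ℝ → ℝ) (s : ℝ) : ℕ := sSup (DmaxSet h s)

def NsepSet (d : ℝ → ℝ → ℝ) (A : Set ℝ) (r : ℝ) : Set ℕ :=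
  {n | ∃ s : Finset ℝ, (s : Set ℝ) ⊆ A ∧ s.card = n ∧
    ∀ x ∈ s, ∀ y ∈ s, x ≠ y → r < d x y}

lemma Nsep_eq (d : ℝ → ℝ → ℝ) (A : Set ℝ) (r : ℝ) : Nsep d A r = sSup (NsepSet d A r) := rfl

lemma DmaxSet_nonempty (h : ℝ → ℝ) (s : ℝ) : (DmaxSet h s).Nonempty := by
  refine ⟨0, 0, fun _ => 0, ⟨?_, fun i => by simp [Set.mem_Icc]⟩, ?_⟩
  · intro i j hij
    have hi := i.2; have hj := j.2
    simp only [Fin.lt_def] at hij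
    omega
  · simp [bigCount, bigSet]

lemma NsepSet_nonempty (d : ℝ → ℝ → ℝ) (A : Set ℝ) (r : ℝ) : (NsepSet d A r).Nonempty :=
  ⟨0, ∅, by simp, by simp, by simp⟩

/-- modulus of continuity on `[0,1]`. -/
lemma exists_modulus {h : ℝ → ℝ} (hh : Continuous h) {ε : ℝ} (hε : 0 < ε) :
    ∃ δ > 0, ∀ u ∈ Set.Icc (0:ℝ) 1, ∀ v ∈ Set.Icc (0:ℝ) 1, |u - v| ≤ δ → |h u - h v| ≤ ε := by
  have huc : UniformContinuousOn h (Set.Icc (0:ℝ) 1) :=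
    (isCompact_Icc (a := (0:ℝ)) (b := 1)).uniformContinuousOn_of_continuous hh.continuousOn
  obtain ⟨δ, hδ, H⟩ := (uniformContinuousOn_iff_le.1 huc) ε hε
  exact ⟨δ, hδ, fun u hu v hv huv => by
    simpa [Real.dist_eq] using H u hu v hv (by simpa [Real.dist_eq] using huv)⟩

lemma floor_lt_floor_of_add_le {δ u v : ℝ} (hδ : 0 < δ) (hu : 0 ≤ u) (huv : u + δ ≤ v) :
    ⌊u / δ⌋₊ < ⌊v / δ⌋₊ := by
  have h1 : u / δ + 1 ≤ v / δ := by
    have : u / δ + 1 = (u + δ) / δ := by field_simp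
    rw [this]
    gcongr
  have h2 : ⌊u / δ⌋₊ + 1 = ⌊u / δ + 1⌋₊ := (Nat.floor_add_one (by positivity)).symm
  have := Nat.floor_le_floor (R := ℝ) h1
  omega

lemma bddAbove_DmaxSet {h : ℝ → ℝ} (hh : Continuous h) {s : ℝ} (hs : 0 < s) :
    BddAbove (DmaxSet h s) := by
  obtain ⟨δ, hδ, H⟩ := exists_modulus hh hs
  refine ⟨⌊1/δ⌋₊ + 1, fun K hK => ?_⟩
  obtain ⟨n, x, hx, rfl⟩ := hK
  have hlen : ∀ i ∈ bigSet h s n x, x i.castSucc + δ ≤ x i.succ := by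
    intro i hi
    simp only [bigSet, Finset.mem_filter] at hi
    by_contra hcon
    push_neg at hcon
    have : |h (x i.castSucc) - h (x i.succ)| ≤ s := by
      refine H _ (hx.2 _) _ (hx.2 _) ?_
      have h1 : x i.castSucc ≤ x i.succ := (hx.1 (Fin.castSucc_lt_succ : i.castSucc < i.succ)).le
      rw [abs_sub_comm, abs_of_nonneg (by linarith)]
      linarith
    exact absurd hi.2 (not_lt.2 this)
  have hb : bigCount h s n x ≤ (Finset.range (⌊1/δ⌋₊ + 1)).card := by
    apply Finset.card_le_card_of_injOn (fun i => ⌊x i.castSucc / δ⌋₊)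
    · intro i hi
      simp only [Finset.mem_coe, Finset.mem_range]
      have h1 : x i.castSucc ≤ 1 := (hx.2 _).2
      have : ⌊x i.castSucc / δ⌋₊ ≤ ⌊1/δ⌋₊ := Nat.floor_le_floor (by gcongr)
      omega
    · intro i hi j hj hij
      dsimp only at hij
      by_contra hne
      rcases lt_or_gt_of_ne hne with hlt | hlt
      · have h1 : x i.castSucc + δ ≤ x i.succ := hlen i hi
        have h2 : x i.succ ≤ x j.castSucc := by
          rcases eq_or_lt_of_le (show i.succ ≤ j.castSucc by
            simp [Fin.le_def]; omega) with he | hl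
          · exact he ▸ le_rfl
          · exact (hx.1 hl).le
        have := floor_lt_floor_of_add_le hδ (hx.2 i.castSucc).1 (by linarith)
        omega
      · have h1 : x j.castSucc + δ ≤ x j.succ := hlen j hj
        have h2 : x j.succ ≤ x i.castSucc := by
          rcases eq_or_lt_of_le (show j.succ ≤ i.castSucc by
            simp [Fin.le_def]; omega) with he | hl
          · exact he ▸ le_rfl
          · exact (hx.1 hl).le
        have := floor_lt_floor_of_add_le hδ (hx.2 j.castSucc).1 (by linarith)
        omega
  simpa using hb


section TreeDist
variable {g : ℝ → ℝ}

lemma bddBelow_img (hg : Continuous g) (x y : ℝ) : BddBelow (g '' Set.uIcc x y) :=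
  ((isCompact_uIcc).image_of_continuousOn hg.continuousOn).bddBelow

lemma sInf_img_le (hg : Continuous g) {x y z : ℝ} (hz : z ∈ Set.uIcc x y) :
    sInf (g '' Set.uIcc x y) ≤ g z :=
  csInf_le (bddBelow_img hg x y) ⟨z, hz, rfl⟩

lemma exists_min_uIcc (hg : Continuous g) (x y : ℝ) :
    ∃ z ∈ Set.uIcc x y, sInf (g '' Set.uIcc x y) = g z ∧ ∀ w ∈ Set.uIcc x y, g z ≤ g w := by
  obtain ⟨z, hz, hmin⟩ := (isCompact_uIcc).exists_isMinOn nonempty_uIcc hg.continuousOn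
  refine ⟨z, hz, le_antisymm (sInf_img_le hg hz) ?_, fun w hw => hmin hw⟩
  refine le_csInf (nonempty_uIcc.image g) ?_
  rintro b ⟨w, hw, rfl⟩
  exact hmin hw

lemma treeDist_comm (g : ℝ → ℝ) (x y : ℝ) : treeDist g x y = treeDist g y x := by
  unfold treeDist
  rw [Set.uIcc_comm]
  ring

lemma treeDist_self (g : ℝ → ℝ) (x : ℝ) : treeDist g x x = 0 := by
  unfold treeDist
  simp [Set.uIcc_self]
  ring

lemma abs_sub_le_of_mem_uIcc {u v z : ℝ} (hz : z ∈ Set.uIcc u v) : |u - z| ≤ |u - v| := by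
  rcases le_total u v with h | h
  · rw [Set.uIcc_of_le h] at hz
    rw [abs_of_nonpos (by linarith [hz.1]), abs_of_nonpos (by linarith)]
    linarith [hz.2]
  · rw [Set.uIcc_of_ge h] at hz
    rw [abs_of_nonneg (by linarith [hz.2]), abs_of_nonneg (by linarith)]
    linarith [hz.1]

lemma uIcc_subset_unit {u v : ℝ} (hu : u ∈ Set.Icc (0:ℝ) 1) (hv : v ∈ Set.Icc (0:ℝ) 1) :
    Set.uIcc u v ⊆ Set.Icc 0 1 := by
  rw [Set.uIcc_eq_union]
  rintro z (hz | hz)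
  · exact ⟨le_trans hu.1 hz.1, le_trans hz.2 hv.2⟩
  · exact ⟨le_trans hv.1 hz.1, le_trans hz.2 hu.2⟩

lemma treeDist_le_of_close (hg : Continuous g) {r δ : ℝ}
    (H : ∀ u ∈ Set.Icc (0:ℝ) 1, ∀ v ∈ Set.Icc (0:ℝ) 1, |u - v| ≤ δ → |g u - g v| ≤ r/2)
    {u v : ℝ} (hu : u ∈ Set.Icc (0:ℝ) 1) (hv : v ∈ Set.Icc (0:ℝ) 1) (huv : |u - v| ≤ δ) :
    treeDist g u v ≤ r := by
  obtain ⟨z, hz, hinf, -⟩ := exists_min_uIcc hg u v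
  have hz01 : z ∈ Set.Icc (0:ℝ) 1 := uIcc_subset_unit hu hv hz
  have h1 : |g u - g z| ≤ r/2 := H u hu z hz01 ((abs_sub_le_of_mem_uIcc hz).trans huv)
  have h2 : |g v - g z| ≤ r/2 := by
    refine H v hv z hz01 ?_
    have := abs_sub_le_of_mem_uIcc (Set.uIcc_comm u v ▸ hz)
    rw [abs_sub_comm v u] at this
    exact this.trans huv
  have e1 := abs_le.1 h1
  have e2 := abs_le.1 h2
  unfold treeDist
  rw [hinf]
  linarith [e1.2, e2.2]

lemma bddAbove_NsepSet (hg : Continuous g) {r : ℝ} (hr : 0 < r) :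
    BddAbove (NsepSet (treeDist g) (Set.Icc 0 1) r) := by
  obtain ⟨δ, hδ, H⟩ := exists_modulus hg (by positivity : (0:ℝ) < r/2)
  refine ⟨⌊1/δ⌋₊ + 1, fun K hK => ?_⟩
  obtain ⟨t, ht, rfl, hsep⟩ := hK
  have hb : t.card ≤ (Finset.range (⌊1/δ⌋₊ + 1)).card := by
    apply Finset.card_le_card_of_injOn (fun y => ⌊y / δ⌋₊)
    · intro y hy
      simp only [Finset.mem_coe, Finset.mem_range]
      have h1 : y ≤ 1 := (ht hy).2
      have : ⌊y / δ⌋₊ ≤ ⌊1/δ⌋₊ := Nat.floor_le_floor (by gcongr)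
      omega
    · intro u hu v hv huv
      dsimp only at huv
      by_contra hne
      have hclose : |u - v| ≤ δ := by
        have hu0 : (0:ℝ) ≤ u := (ht hu).1
        have hv0 : (0:ℝ) ≤ v := (ht hv).1
        have l1 : (⌊u / δ⌋₊ : ℝ) ≤ u / δ := Nat.floor_le (by positivity)
        have l2 : u / δ < ⌊u / δ⌋₊ + 1 := Nat.lt_floor_add_one _
        have l3 : (⌊v / δ⌋₊ : ℝ) ≤ v / δ := Nat.floor_le (by positivity)
        have l4 : v / δ < ⌊v / δ⌋₊ + 1 := Nat.lt_floor_add_one _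
        rw [huv] at l1 l2
        have hq : |u/δ - v/δ| ≤ 1 := by
          rw [abs_le]; constructor <;> linarith
        have key : u - v = (u/δ - v/δ) * δ := by field_simp
        calc |u - v| = |u/δ - v/δ| * δ := by rw [key, abs_mul, abs_of_pos hδ]
          _ ≤ 1 * δ := by gcongr
          _ = δ := one_mul δ
      have := treeDist_le_of_close hg H (ht hu) (ht hv) hclose
      exact absurd (hsep u hu v hv hne) (not_lt.2 this)
  simpa using hb

lemma le_Nsep (hg : Continuous g) {r : ℝ} (hr : 0 < r) {K : ℕ}
    (hK : K ∈ NsepSet (treeDist g) (Set.Icc 0 1) r) :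
    K ≤ Nsep (treeDist g) (Set.Icc 0 1) r :=
  le_csSup (bddAbove_NsepSet hg hr) hK

lemma Nsep_le {d : ℝ → ℝ → ℝ} {A : Set ℝ} {r : ℝ} {B : ℕ}
    (hB : ∀ K ∈ NsepSet d A r, K ≤ B) : Nsep d A r ≤ B :=
  csSup_le (NsepSet_nonempty d A r) hB

lemma Nsep_antitone (hg : Continuous g) {r r' : ℝ} (hr : 0 < r) (hrr : r ≤ r') :
    Nsep (treeDist g) (Set.Icc 0 1) r' ≤ Nsep (treeDist g) (Set.Icc 0 1) r := by
  refine Nsep_le fun K hK => le_Nsep hg hr ?_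
  obtain ⟨t, ht, rfl, hsep⟩ := hK
  exact ⟨t, ht, rfl, fun x hx y hy hxy => lt_of_le_of_lt hrr (hsep x hx y hy hxy)⟩

lemma le_Dmax {h : ℝ → ℝ} (hh : Continuous h) {s : ℝ} (hs : 0 < s) {n : ℕ}
    {x : Fin (n+1) → ℝ} (hx : IsPartition n x) : bigCount h s n x ≤ Dmax h s :=
  le_csSup (bddAbove_DmaxSet hh hs) ⟨n, x, hx, rfl⟩

lemma Dmax_le {h : ℝ → ℝ} {s : ℝ} {B : ℕ} (hB : ∀ K ∈ DmaxSet h s, K ≤ B) :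
    Dmax h s ≤ B := csSup_le (DmaxSet_nonempty h s) hB

end TreeDist


section Core
variable {g : ℝ → ℝ}

/-- Up-steps of a partition have pairwise tree-separated right endpoints. -/
lemma up_sep (hg : Continuous g) {s : ℝ} {n : ℕ} {x : Fin (n+1) → ℝ} (hx : IsPartition n x)
    {i j : Fin n} (hij : i < j) (hj : s < g (x j.succ) - g (x j.castSucc)) :
    s < treeDist g (x i.succ) (x j.succ) := by
  have hle1 : x i.succ ≤ x j.castSucc := by
    rcases eq_or_lt_of_le (show i.succ ≤ j.castSucc by
      simp only [Fin.le_def, Fin.val_succ, Fin.coe_castSucc]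
      exact hij) with he | hl
    · exact he ▸ le_rfl
    · exact (hx.1 hl).le
  have hle2 : x j.castSucc ≤ x j.succ := (hx.1 (Fin.castSucc_lt_succ : j.castSucc < j.succ)).le
  have hle : x i.succ ≤ x j.succ := hle1.trans hle2
  have m1 : sInf (g '' Set.uIcc (x i.succ) (x j.succ)) ≤ g (x j.castSucc) :=
    sInf_img_le hg (by rw [Set.uIcc_of_le hle]; exact ⟨hle1, hle2⟩)
  have m2 : sInf (g '' Set.uIcc (x i.succ) (x j.succ)) ≤ g (x i.succ) :=
    sInf_img_le hg Set.left_mem_uIcc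
  unfold treeDist
  linarith

/-- Down-steps of a partition have pairwise tree-separated left endpoints. -/
lemma down_sep (hg : Continuous g) {s : ℝ} {n : ℕ} {x : Fin (n+1) → ℝ} (hx : IsPartition n x)
    {i j : Fin n} (hij : i < j) (hi : s < g (x i.castSucc) - g (x i.succ)) :
    s < treeDist g (x i.castSucc) (x j.castSucc) := by
  have hle1 : x i.castSucc ≤ x i.succ := (hx.1 (Fin.castSucc_lt_succ : i.castSucc < i.succ)).le
  have hle2 : x i.succ ≤ x j.castSucc := by
    rcases eq_or_lt_of_le (show i.succ ≤ j.castSucc by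
      simp only [Fin.le_def, Fin.val_succ, Fin.coe_castSucc]
      exact hij) with he | hl
    · exact he ▸ le_rfl
    · exact (hx.1 hl).le
  have hle : x i.castSucc ≤ x j.castSucc := hle1.trans hle2
  have m1 : sInf (g '' Set.uIcc (x i.castSucc) (x j.castSucc)) ≤ g (x i.succ) :=
    sInf_img_le hg (by rw [Set.uIcc_of_le hle]; exact ⟨hle1, hle2⟩)
  have m2 : sInf (g '' Set.uIcc (x i.castSucc) (x j.castSucc)) ≤ g (x j.castSucc) :=
    sInf_img_le hg Set.right_mem_uIcc
  unfold treeDist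
  linarith

/-- Counting big increments by separated sets in the tree. -/
lemma bigCount_le_two_mul_Nsep (hg : Continuous g) {s : ℝ} (hs : 0 < s) {n : ℕ}
    {x : Fin (n+1) → ℝ} (hx : IsPartition n x) :
    bigCount g s n x ≤ 2 * Nsep (treeDist g) (Set.Icc 0 1) (s/2) := by
  classical
  set U : Finset (Fin n) :=
    Finset.univ.filter (fun i => s < g (x i.succ) - g (x i.castSucc)) with hU
  set D : Finset (Fin n) :=
    Finset.univ.filter (fun i => s < g (x i.castSucc) - g (x i.succ)) with hD
  have hsub : bigSet g s n x ⊆ U ∪ D := by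
    intro i hi
    simp only [Finset.mem_coe, bigSet, Finset.mem_filter, Finset.mem_univ, true_and] at hi
    simp only [hU, hD, Finset.mem_union, Finset.mem_filter, Finset.mem_univ, true_and]
    rcases lt_abs.1 hi with h | h
    · right; exact h
    · left; linarith
  have hUcard : U.card ≤ Nsep (treeDist g) (Set.Icc 0 1) (s/2) := by
    refine le_Nsep hg (by positivity) ⟨U.image (fun i => x i.succ), ?_, ?_, ?_⟩
    · intro u hu
      simp only [Finset.coe_image, Set.mem_image, Finset.mem_coe] at hu
      obtain ⟨i, -, rfl⟩ := hu
      exact hx.2 _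
    · refine Finset.card_image_of_injOn ?_
      intro i _ j _ hij
      exact Fin.succ_injective _ (hx.1.injective hij)
    · intro u hu v hv huv
      simp only [Finset.mem_image] at hu hv
      obtain ⟨i, hiU, rfl⟩ := hu
      obtain ⟨j, hjU, rfl⟩ := hv
      simp only [hU, Finset.mem_filter, Finset.mem_univ, true_and] at hiU hjU
      have hijne : i ≠ j := fun h => huv (h ▸ rfl)
      rcases lt_or_gt_of_ne hijne with hlt | hlt
      · have := up_sep hg hx hlt hjU
        linarith
      · have := up_sep hg hx hlt hiU
        rw [treeDist_comm] at this
        linarith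
  have hDcard : D.card ≤ Nsep (treeDist g) (Set.Icc 0 1) (s/2) := by
    refine le_Nsep hg (by positivity) ⟨D.image (fun i => x i.castSucc), ?_, ?_, ?_⟩
    · intro u hu
      simp only [Finset.coe_image, Set.mem_image, Finset.mem_coe] at hu
      obtain ⟨i, -, rfl⟩ := hu
      exact hx.2 _
    · refine Finset.card_image_of_injOn ?_
      intro i _ j _ hij
      exact Fin.castSucc_injective _ (hx.1.injective hij)
    · intro u hu v hv huv
      simp only [Finset.mem_image] at hu hv
      obtain ⟨i, hiD, rfl⟩ := hu
      obtain ⟨j, hjD, rfl⟩ := hv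
      simp only [hD, Finset.mem_filter, Finset.mem_univ, true_and] at hiD hjD
      have hijne : i ≠ j := fun h => huv (h ▸ rfl)
      rcases lt_or_gt_of_ne hijne with hlt | hlt
      · have := down_sep hg hx hlt hiD
        linarith
      · have := down_sep hg hx hlt hjD
        rw [treeDist_comm] at this
        linarith
  calc bigCount g s n x ≤ (U ∪ D).card := Finset.card_le_card hsub
    _ ≤ U.card + D.card := Finset.card_union_le U D
    _ ≤ 2 * Nsep (treeDist g) (Set.Icc 0 1) (s/2) := by omega

/-- In a gap between two tree-separated points one can pick an intermediate point
witnessing a big increment. -/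
lemma gap_choice (hg : Continuous g) {u v r : ℝ} (huv : u < v) (hd : r < treeDist g u v) :
    ∃ wv, u < wv ∧ wv < v ∧ (r/2 < |g u - g wv| ∨ r/2 < |g wv - g v|) := by
  obtain ⟨z, hz, hinf, hmin⟩ := exists_min_uIcc hg u v
  have hzIcc : z ∈ Set.Icc u v := by rwa [Set.uIcc_of_le huv.le] at hz
  have hd' : r < g u + g v - 2 * g z := by
    unfold treeDist at hd; rwa [hinf] at hd
  have hu' : g z ≤ g u := hmin u Set.left_mem_uIcc
  have hv' : g z ≤ g v := hmin v Set.right_mem_uIcc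
  by_cases hcase : z = u ∨ z = v
  · -- single big increment
    have habs : r < |g u - g v| := by
      rcases hcase with rfl | rfl
      · rw [abs_sub_comm, abs_of_nonneg (by linarith)]; linarith
      · rw [abs_of_nonneg (by linarith)]; linarith
    refine ⟨(u + v) / 2, by linarith, by linarith, ?_⟩
    have htri := abs_sub_le (g u) (g ((u+v)/2)) (g v)
    rcases le_or_gt |g u - g ((u+v)/2)| (r/2) with h | h
    · right; linarith
    · left; exact h
  · push_neg at hcase
    have hzo : u < z ∧ z < v := by
      constructor
      · exact lt_of_le_of_ne hzIcc.1 (Ne.symm hcase.1)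
      · exact lt_of_le_of_ne hzIcc.2 hcase.2
    refine ⟨z, hzo.1, hzo.2, ?_⟩
    rcases le_or_gt (g u - g z) (r/2) with h | h
    · right
      rw [abs_sub_comm, abs_of_nonneg (by linarith)]
      linarith
    · left
      rw [abs_of_nonneg (by linarith)]
      linarith

/-- A separated set in the tree yields a partition with many big increments. -/
lemma Nsep_le_Dmax_succ (hg : Continuous g) {r : ℝ} (hr : 0 < r) :
    Nsep (treeDist g) (Set.Icc 0 1) r ≤ Dmax g (r/2/2) + 1 := by
  classical
  set N := Nsep (treeDist g) (Set.Icc 0 1) r with hN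
  rcases Nat.lt_or_ge N 2 with hN2 | hN2
  · omega
  have hmem : N ∈ NsepSet (treeDist g) (Set.Icc 0 1) r :=
    Nat.sSup_mem (NsepSet_nonempty _ _ _) (bddAbove_NsepSet hg hr)
  obtain ⟨t, ht, hcard, hsep⟩ := hmem
  set y : Fin N → ℝ := fun i => ((t.orderIsoOfFin hcard) i : ℝ) with hy
  have hymem : ∀ i, y i ∈ t := fun i => ((t.orderIsoOfFin hcard) i).2
  have hymono : StrictMono y := by
    intro i j hij
    exact Subtype.coe_lt_coe.2 ((t.orderIsoOfFin hcard).strictMono hij)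
  -- total versions
  set Y : ℕ → ℝ := fun m => if h : m < N then y ⟨m, h⟩ else 0 with hYdef
  have hYeq : ∀ m (h : m < N), Y m = y ⟨m, h⟩ := fun m h => dif_pos h
  have hchoice : ∀ m : Fin (N-1), ∃ wv, Y m.val < wv ∧ wv < Y (m.val+1) ∧
      (r/2 < |g (Y m.val) - g wv| ∨ r/2 < |g wv - g (Y (m.val+1))|) := by
    intro m
    have h1 : m.val < N := by omega
    have h2 : m.val + 1 < N := by omega
    rw [hYeq _ h1, hYeq _ h2]
    have hlt : y ⟨m.val, h1⟩ < y ⟨m.val+1, h2⟩ := hymono (by simp [Fin.lt_def])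
    have hd : r < treeDist g (y ⟨m.val, h1⟩) (y ⟨m.val+1, h2⟩) :=
      hsep _ (hymem _) _ (hymem _) hlt.ne
    exact gap_choice hg hlt hd
  obtain ⟨w, hw⟩ := Classical.axiomOfChoice hchoice
  set W : ℕ → ℝ := fun m => if h : m < N - 1 then w ⟨m, h⟩ else 0 with hWdef
  have hWspec : ∀ m (h : m < N - 1), Y m < W m ∧ W m < Y (m+1) ∧
      (r/2 < |g (Y m) - g (W m)| ∨ r/2 < |g (W m) - g (Y (m+1))|) := by
    intro m h
    have : W m = w ⟨m, h⟩ := dif_pos h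
    rw [this]
    exact hw ⟨m, h⟩
  -- the interleaved partition
  set n := 2 * N - 2 with hn
  set x : Fin (n+1) → ℝ := fun k => if k.val % 2 = 0 then Y (k.val / 2) else W (k.val / 2)
    with hx
  have hxval : ∀ k : Fin (n+1), x k = if k.val % 2 = 0 then Y (k.val / 2) else W (k.val / 2) :=
    fun k => rfl
  have hpart : IsPartition n x := by
    constructor
    · rw [Fin.strictMono_iff_lt_succ]
      intro i
      have hic : (i.castSucc : Fin (n+1)).val = i.val := rfl
      have his : (i.succ : Fin (n+1)).val = i.val + 1 := rfl
      have hi2 := i.isLt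
      rw [hxval, hxval, hic, his]
      rcases Nat.mod_two_eq_zero_or_one i.val with hpar | hpar
      · rw [if_pos hpar, if_neg (by omega)]
        have he : (i.val + 1) / 2 = i.val / 2 := by omega
        rw [he]
        exact (hWspec (i.val / 2) (by omega)).1
      · rw [if_neg (by omega), if_pos (by omega)]
        have he : (i.val + 1) / 2 = i.val / 2 + 1 := by omega
        rw [he]
        exact (hWspec (i.val / 2) (by omega)).2.1
    · intro k
      have hk2 := k.isLt
      rw [hxval]
      rcases Nat.mod_two_eq_zero_or_one k.val with hpar | hpar
      · rw [if_pos hpar]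
        have h1 : k.val / 2 < N := by omega
        rw [hYeq _ h1]
        exact ht (hymem _)
      · rw [if_neg (by omega)]
        have h1 : k.val / 2 < N - 1 := by omega
        obtain ⟨l1, l2, -⟩ := hWspec _ h1
        have m1 : Y (k.val/2) ∈ Set.Icc (0:ℝ) 1 := by
          rw [hYeq _ (by omega)]; exact ht (hymem _)
        have m2 : Y (k.val/2 + 1) ∈ Set.Icc (0:ℝ) 1 := by
          rw [hYeq _ (by omega)]; exact ht (hymem _)
        exact ⟨le_trans m1.1 l1.le, le_trans l2.le m2.2⟩
  -- many big increments
  have hbig : N - 1 ≤ bigCount g (r/2/2) n x := by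
    have : (Finset.univ : Finset (Fin (N-1))).card ≤ (bigSet g (r/2/2) n x).card := by
      refine Finset.card_le_card_of_injOn
        (fun m => if r/2 < |g (Y m.val) - g (W m.val)| then
          (⟨2 * m.val, by omega⟩ : Fin n) else ⟨2 * m.val + 1, by omega⟩) ?_ ?_
      · intro m _
        have hm := m.isLt
        obtain ⟨l1, l2, hor⟩ := hWspec m.val (by omega)
        dsimp only
        by_cases hc : r/2 < |g (Y m.val) - g (W m.val)|
        · rw [if_pos hc]
          simp only [Finset.mem_coe, bigSet, Finset.mem_filter, Finset.mem_univ, true_and]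
          have e1 : x (Fin.castSucc ⟨2 * m.val, by omega⟩) = Y m.val := by
            rw [hxval]
            have : ((⟨2 * m.val, by omega⟩ : Fin n).castSucc).val = 2 * m.val := rfl
            rw [this, if_pos (by omega)]
            congr 1
            omega
          have e2 : x (Fin.succ ⟨2 * m.val, by omega⟩) = W m.val := by
            rw [hxval]
            have : ((⟨2 * m.val, by omega⟩ : Fin n).succ).val = 2 * m.val + 1 := rfl
            rw [this, if_neg (by omega)]
            congr 1
            omega
          rw [e1, e2]
          linarith
        · rw [if_neg hc]
          have hc2 : r/2 < |g (W m.val) - g (Y (m.val+1))| := by tauto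
          simp only [Finset.mem_coe, bigSet, Finset.mem_filter, Finset.mem_univ, true_and]
          have e1 : x (Fin.castSucc ⟨2 * m.val + 1, by omega⟩) = W m.val := by
            rw [hxval]
            have : ((⟨2 * m.val + 1, by omega⟩ : Fin n).castSucc).val = 2 * m.val + 1 := rfl
            rw [this, if_neg (by omega)]
            congr 1
            omega
          have e2 : x (Fin.succ ⟨2 * m.val + 1, by omega⟩) = Y (m.val + 1) := by
            rw [hxval]
            have : ((⟨2 * m.val + 1, by omega⟩ : Fin n).succ).val = 2 * m.val + 2 := rfl
            rw [this, if_pos (by omega)]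
            congr 1
            omega
          rw [e1, e2]
          linarith
      · intro m1 _ m2 _ hm
        dsimp only at hm
        apply Fin.ext
        by_cases c1 : r/2 < |g (Y m1.val) - g (W m1.val)| <;>
          by_cases c2 : r/2 < |g (Y m2.val) - g (W m2.val)| <;>
            [rw [if_pos c1, if_pos c2] at hm; rw [if_pos c1, if_neg c2] at hm;
             rw [if_neg c1, if_pos c2] at hm; rw [if_neg c1, if_neg c2] at hm] <;>
              (simp only [Fin.mk.injEq] at hm; omega)
    simpa [bigCount] using this
  have hD : bigCount g (r/2/2) n x ≤ Dmax g (r/2/2) := le_Dmax hg (by positivity) hpart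
  omega

end Core


section Split

/-- Splitting a partition at a point `c` where the function changes representation. -/
lemma splitCount {h h' : ℝ → ℝ} {s c C : ℝ} {φ₁ φ₂ : ℝ → ℝ}
    (hh' : Continuous h') (hs : 0 < s)
    (hφ₁m : StrictMono φ₁) (hφ₂m : StrictMono φ₂)
    (h₁ : ∀ t ∈ Set.Icc (0:ℝ) 1, t < c → φ₁ t ∈ Set.Icc (0:ℝ) 1 ∧ h t = h' (φ₁ t) + C)
    (h₂ : ∀ t ∈ Set.Icc (0:ℝ) 1, c ≤ t → φ₂ t ∈ Set.Icc (0:ℝ) 1 ∧ h t = h' (φ₂ t) + C)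
    {n : ℕ} {x : Fin (n+1) → ℝ} (hx : IsPartition n x) :
    bigCount h s n x ≤ 2 * Dmax h' s + 1 := by
  classical
  have hDle : ∀ (ψ : ℝ → ℝ), StrictMono ψ → (∀ i : Fin (n+1), ψ (x i) ∈ Set.Icc (0:ℝ) 1) →
      (∀ i : Fin (n+1), h (x i) = h' (ψ (x i)) + C) → bigCount h s n x ≤ Dmax h' s := by
    intro ψ hψm hψmem hψeq
    have hpart : IsPartition n (fun i => ψ (x i)) := ⟨hψm.comp hx.1, hψmem⟩
    have heq : bigCount h s n x = bigCount h' s n (fun i => ψ (x i)) := by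
      unfold bigCount bigSet
      congr 1
      apply Finset.filter_congr
      intro i _
      rw [hψeq i.castSucc, hψeq i.succ]
      ring_nf
    rw [heq]
    exact le_Dmax hh' hs hpart
  by_cases hex : ∃ i : Fin (n+1), c ≤ x i
  · have hne : (Finset.univ.filter (fun i : Fin (n+1) => c ≤ x i)).Nonempty := by
      obtain ⟨i, hi⟩ := hex
      exact ⟨i, Finset.mem_filter.2 ⟨Finset.mem_univ i, hi⟩⟩
    obtain ⟨i₀, hi₀f⟩ : ∃ i₀ : Fin (n+1),
        i₀ = (Finset.univ.filter (fun i : Fin (n+1) => c ≤ x i)).min' hne := ⟨_, rfl⟩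
    have hi₀mem : c ≤ x i₀ := by
      have := Finset.min'_mem (Finset.univ.filter (fun i : Fin (n+1) => c ≤ x i)) hne
      rw [← hi₀f] at this
      exact (Finset.mem_filter.1 this).2
    have hlow : ∀ (k : ℕ) (hk : k < n+1), k < i₀.val → x ⟨k, hk⟩ < c := by
      intro k hk hkm
      by_contra hcon
      push_neg at hcon
      have hmem : (⟨k, hk⟩ : Fin (n+1)) ∈
          Finset.univ.filter (fun i : Fin (n+1) => c ≤ x i) :=
        Finset.mem_filter.2 ⟨Finset.mem_univ _, hcon⟩
      have := Finset.min'_le _ _ hmem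
      rw [← hi₀f, Fin.le_def] at this
      simp only [Fin.val_mk] at this
      omega
    have hhigh : ∀ (k : ℕ) (hk : k < n+1), i₀.val ≤ k → c ≤ x ⟨k, hk⟩ := by
      intro k hk hkm
      rcases eq_or_lt_of_le hkm with he | hl
      · have : i₀ = ⟨k, hk⟩ := Fin.ext he
        exact this ▸ hi₀mem
      · refine le_trans hi₀mem (hx.1 ?_).le
        rw [Fin.lt_def]
        simpa using hl
    rcases Nat.eq_zero_or_pos i₀.val with hm0 | hm1
    · -- everything in the second block
      have := hDle φ₂ hφ₂m
        (fun i => (h₂ (x i) (hx.2 i) (hhigh i.val i.isLt (by omega))).1)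
        (fun i => (h₂ (x i) (hx.2 i) (hhigh i.val i.isLt (by omega))).2)
      omega
    · -- two blocks
      have hmn : i₀.val ≤ n := by have := i₀.isLt; omega
      set m := i₀.val with hmdef
      have hx1pf : ∀ j : Fin ((m-1)+1), j.val < n + 1 := fun j => by
        have := j.isLt; omega
      have hx2pf : ∀ j : Fin ((n-m)+1), m + j.val < n + 1 := fun j => by
        have := j.isLt; omega
      have hpart1 : IsPartition (m-1) (fun j => φ₁ (x ⟨j.val, hx1pf j⟩)) := by
        constructor
        · intro i j hij
          refine hφ₁m (hx.1 ?_)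
          rw [Fin.lt_def]
          simpa using hij
        · intro j
          exact (h₁ _ (hx.2 _) (hlow _ _ (by have := j.isLt; omega))).1
      have hpart2 : IsPartition (n-m) (fun j => φ₂ (x ⟨m + j.val, hx2pf j⟩)) := by
        constructor
        · intro i j hij
          refine hφ₂m (hx.1 ?_)
          rw [Fin.lt_def]
          simp only [Fin.val_mk]
          have := Fin.lt_def.1 hij
          omega
        · intro j
          exact (h₂ _ (hx.2 _) (hhigh _ _ (by omega))).1
      have hc1 : ((bigSet h s n x).filter (fun i => i.val + 1 < m)).card ≤
          bigCount h' s (m-1) (fun j => φ₁ (x ⟨j.val, hx1pf j⟩)) := by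
        rcases Nat.lt_or_ge m 2 with hm2 | hm2
        · have he : ((bigSet h s n x).filter (fun i : Fin n => i.val + 1 < m)) = ∅ := by
            apply Finset.filter_false_of_mem
            intro i _
            omega
          rw [he]
          simp [bigCount]
        · apply Finset.card_le_card_of_injOn
            (fun i => (⟨min i.val (m-2), by omega⟩ : Fin (m-1)))
          · intro i hi
            simp only [Finset.mem_coe, Finset.mem_filter, bigSet, Finset.mem_univ, true_and] at hi
            obtain ⟨hiB, hilt⟩ := hi
            have hminv : min i.val (m-2) = i.val := min_eq_left (by omega)
            simp only [Finset.mem_coe, bigSet, Finset.mem_filter, Finset.mem_univ, true_and]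
            have r1 := (h₁ (x i.castSucc) (hx.2 _) (hlow i.val (by omega) (by omega))).2
            have r2 := (h₁ (x i.succ) (hx.2 _) (hlow (i.val+1) (by omega) (by omega))).2
            rw [r1, r2] at hiB
            have hiB' : s < |h' (φ₁ (x i.castSucc)) - h' (φ₁ (x i.succ))| := by
              have e : h' (φ₁ (x i.castSucc)) - h' (φ₁ (x i.succ)) =
                  (h' (φ₁ (x i.castSucc)) + C) - (h' (φ₁ (x i.succ)) + C) := by ring
              rw [e]; exact hiB
            convert hiB' using 6 <;>
              · apply Fin.ext
                simp only [Fin.coe_castSucc, Fin.val_succ, Fin.val_mk]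
                omega
          · intro i hi j hj hij
            simp only [Finset.mem_coe, Finset.mem_filter] at hi hj
            apply Fin.ext
            simp only [Fin.mk.injEq] at hij
            omega
      have hc2 : ((bigSet h s n x).filter (fun i => m ≤ i.val)).card ≤
          bigCount h' s (n-m) (fun j => φ₂ (x ⟨m + j.val, hx2pf j⟩)) := by
        rcases eq_or_lt_of_le hmn with heq | hlt
        · have he : ((bigSet h s n x).filter (fun i : Fin n => m ≤ i.val)) = ∅ := by
            apply Finset.filter_false_of_mem
            intro i _
            have := i.isLt
            omega
          rw [he]
          simp [bigCount]
        · apply Finset.card_le_card_of_injOn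
            (fun i => (⟨min (i.val - m) (n - m - 1), by omega⟩ : Fin (n-m)))
          · intro i hi
            simp only [Finset.mem_coe, Finset.mem_filter, bigSet, Finset.mem_univ, true_and] at hi
            obtain ⟨hiB, hile⟩ := hi
            have hin := i.isLt
            have hminv : min (i.val - m) (n - m - 1) = i.val - m := min_eq_left (by omega)
            simp only [Finset.mem_coe, bigSet, Finset.mem_filter, Finset.mem_univ, true_and]
            have r1 := (h₂ (x i.castSucc) (hx.2 _) (hhigh i.val (by omega) (by omega))).2
            have r2 := (h₂ (x i.succ) (hx.2 _) (hhigh (i.val+1) (by omega) (by omega))).2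
            rw [r1, r2] at hiB
            have hiB' : s < |h' (φ₂ (x i.castSucc)) - h' (φ₂ (x i.succ))| := by
              have e : h' (φ₂ (x i.castSucc)) - h' (φ₂ (x i.succ)) =
                  (h' (φ₂ (x i.castSucc)) + C) - (h' (φ₂ (x i.succ)) + C) := by ring
              rw [e]; exact hiB
            convert hiB' using 6 <;>
              · apply Fin.ext
                simp only [Fin.coe_castSucc, Fin.val_succ, Fin.val_mk]
                omega
          · intro i hi j hj hij
            simp only [Finset.mem_coe, Finset.mem_filter] at hi hj
            have := i.isLt
            have := j.isLt
            apply Fin.ext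
            simp only [Fin.mk.injEq] at hij
            omega
      have hc3 : ((bigSet h s n x).filter (fun i => i.val + 1 = m)).card ≤ 1 := by
        apply Finset.card_le_one.2
        intro i hi j hj
        simp only [Finset.mem_filter] at hi hj
        apply Fin.ext
        omega
      have hsplit : bigSet h s n x ⊆ ((bigSet h s n x).filter (fun i => i.val + 1 < m)) ∪
          ((bigSet h s n x).filter (fun i => m ≤ i.val)) ∪
          ((bigSet h s n x).filter (fun i => i.val + 1 = m)) := by
        intro i hi
        simp only [Finset.mem_union, Finset.mem_filter]
        rcases Nat.lt_trichotomy (i.val + 1) m with hd | hd | hd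
        · exact Or.inl (Or.inl ⟨hi, hd⟩)
        · exact Or.inr ⟨hi, hd⟩
        · exact Or.inl (Or.inr ⟨hi, by omega⟩)
      have hd1 := le_Dmax hh' hs hpart1
      have hd2 := le_Dmax hh' hs hpart2
      have hcard := Finset.card_le_card hsplit
      have hcu := Finset.card_union_le (((bigSet h s n x).filter (fun i => i.val + 1 < m)) ∪
          ((bigSet h s n x).filter (fun i => m ≤ i.val)))
          ((bigSet h s n x).filter (fun i => i.val + 1 = m))
      have hcu2 := Finset.card_union_le ((bigSet h s n x).filter (fun i => i.val + 1 < m))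
          ((bigSet h s n x).filter (fun i => m ≤ i.val))
      unfold bigCount at *
      omega
  · -- everything below c
    push_neg at hex
    have := hDle φ₁ hφ₁m
      (fun i => (h₁ (x i) (hx.2 i) (hex i)).1)
      (fun i => (h₁ (x i) (hx.2 i) (hex i)).2)
    omega

end Split


section PVar

lemma varSum_nonneg (f : ℝ → ℝ) (p : ℝ) (n : ℕ) (x : Fin (n+1) → ℝ) :
    0 ≤ varSum f p n x :=
  Finset.sum_nonneg fun i _ => Real.rpow_nonneg (abs_nonneg _) p

lemma ofReal_varSum_le_pVar {f : ℝ → ℝ} {p : ℝ} {n : ℕ} {x : Fin (n+1) → ℝ}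
    (hx : IsPartition n x) : ENNReal.ofReal (varSum f p n x) ≤ pVar f p := by
  calc ENNReal.ofReal (varSum f p n x)
      ≤ ⨆ (_ : IsPartition n x), ENNReal.ofReal (varSum f p n x) :=
        le_iSup (fun _ : IsPartition n x => ENNReal.ofReal (varSum f p n x)) hx
    _ ≤ ⨆ (x : Fin (n+1) → ℝ) (_ : IsPartition n x), ENNReal.ofReal (varSum f p n x) :=
        le_iSup (fun x => ⨆ (_ : IsPartition n x), ENNReal.ofReal (varSum f p n x)) x
    _ ≤ pVar f p := le_iSup (fun n => ⨆ (x : Fin (n+1) → ℝ) (_ : IsPartition n x),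
        ENNReal.ofReal (varSum f p n x)) n

lemma varSum_le_toReal {f : ℝ → ℝ} {p : ℝ} (hfin : pVar f p ≠ ⊤) {n : ℕ}
    {x : Fin (n+1) → ℝ} (hx : IsPartition n x) : varSum f p n x ≤ (pVar f p).toReal := by
  have h1 := ofReal_varSum_le_pVar (f := f) (p := p) hx
  have h2 := ENNReal.toReal_mono hfin h1
  rwa [ENNReal.toReal_ofReal (varSum_nonneg f p n x)] at h2

lemma pVar_le_of_bound {f : ℝ → ℝ} {p B : ℝ}
    (hB : ∀ n (x : Fin (n+1) → ℝ), IsPartition n x → varSum f p n x ≤ B) :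
    pVar f p ≤ ENNReal.ofReal B := by
  refine iSup_le fun n => iSup_le fun x => iSup_le fun hx => ?_
  exact ENNReal.ofReal_le_ofReal (hB n x hx)

lemma bigCount_mul_le_varSum {f : ℝ → ℝ} {q s : ℝ} (hq : 0 ≤ q) (hs : 0 < s)
    {n : ℕ} {x : Fin (n+1) → ℝ} :
    (bigCount f s n x : ℝ) * s ^ q ≤ varSum f q n x := by
  have h1 : (bigCount f s n x : ℝ) * s ^ q = ∑ _i ∈ bigSet f s n x, s ^ q := by
    rw [Finset.sum_const, nsmul_eq_mul]
    rfl
  rw [h1]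
  refine le_trans (Finset.sum_le_sum ?_) (Finset.sum_le_univ_sum_of_nonneg ?_)
  · intro i hi
    simp only [Finset.mem_coe, bigSet, Finset.mem_filter, Finset.mem_univ, true_and] at hi
    exact Real.rpow_le_rpow hs.le hi.le hq
  · intro i
    exact Real.rpow_nonneg (abs_nonneg _) _

lemma Dmax_le_of_pVar_finite {f : ℝ → ℝ} {q s : ℝ} (hq : 0 ≤ q) (hs : 0 < s)
    (hfin : pVar f q ≠ ⊤) :
    (Dmax f s : ℝ) ≤ (pVar f q).toReal / s ^ q := by
  have hspos : (0:ℝ) < s ^ q := Real.rpow_pos_of_pos hs q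
  have hDle : Dmax f s ≤ ⌊(pVar f q).toReal / s ^ q⌋₊ := by
    refine Dmax_le fun K hK => ?_
    obtain ⟨n, x, hx, rfl⟩ := hK
    refine Nat.le_floor ?_
    rw [le_div_iff₀ hspos]
    exact le_trans (bigCount_mul_le_varSum hq hs) (varSum_le_toReal hfin hx)
  calc (Dmax f s : ℝ) ≤ (⌊(pVar f q).toReal / s ^ q⌋₊ : ℝ) := Nat.cast_le.2 hDle
    _ ≤ (pVar f q).toReal / s ^ q := Nat.floor_le (by positivity)

end PVar

section Levels

variable {g : ℝ → ℝ}

/-- Staircase of last hitting times below the running maximum gives many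
separated points in the tree. -/
lemma levels_le_Nsep (hg : Continuous g) (hg0 : g 0 = 0) {xm : ℝ}
    (hxm : xm ∈ Set.Icc (0:ℝ) 1) (hmax : ∀ t ∈ Set.Icc (0:ℝ) 1, g t ≤ g xm)
    {r : ℝ} (hr : 0 < r) (hrS : 2 * r < g xm) {K : ℕ}
    (hK : ∀ j : ℕ, j < K → 2 * r * j < g xm) :
    K ≤ Nsep (treeDist g) (Set.Icc 0 1) r := by
  classical
  have hxm0 : (0:ℝ) ≤ xm := hxm.1
  set A : ℕ → Set ℝ := fun j => {t | t ∈ Set.Icc 0 xm ∧ g t ≤ 2 * r * j} with hA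
  have hAclosed : ∀ j, IsClosed (A j) := by
    intro j
    have : A j = Set.Icc 0 xm ∩ g ⁻¹' (Set.Iic (2 * r * j)) := rfl
    rw [this]
    exact isClosed_Icc.inter (isClosed_Iic.preimage hg)
  have hAne : ∀ j, (A j).Nonempty := by
    intro j
    exact ⟨0, ⟨le_rfl, hxm0⟩, by rw [hg0]; positivity⟩
  have hAbdd : ∀ j, BddAbove (A j) := fun j =>
    (bddAbove_Icc (a := (0:ℝ)) (b := xm)).mono (fun t ht => ht.1)
  set u : ℕ → ℝ := fun j => sSup (A j) with hu
  have humem : ∀ j, u j ∈ A j := fun j =>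
    (hAclosed j).csSup_mem (hAne j) (hAbdd j)
  have huIcc : ∀ j, u j ∈ Set.Icc (0:ℝ) xm := fun j => (humem j).1
  have hugle : ∀ j, g (u j) ≤ 2 * r * j := fun j => (humem j).2
  have humono : ∀ i j : ℕ, i ≤ j → u i ≤ u j := by
    intro i j hij
    refine csSup_le_csSup (hAbdd j) (hAne i) ?_
    intro t ht
    exact ⟨ht.1, le_trans ht.2 (by have : (i:ℝ) ≤ j := Nat.cast_le.2 hij; nlinarith)⟩
  have hult : ∀ j : ℕ, 2 * r * j < g xm → u j < xm := by
    intro j hj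
    rcases eq_or_lt_of_le (huIcc j).2 with he | hl
    · exfalso
      have := hugle j
      rw [he] at this
      linarith
    · exact hl
  have habove : ∀ j : ℕ, ∀ t, u j < t → t ≤ xm → 2 * r * j < g t := by
    intro j t ht1 ht2
    by_contra hcon
    push_neg at hcon
    have : t ∈ A j := ⟨⟨le_trans (huIcc j).1 ht1.le, ht2⟩, hcon⟩
    have hle2 : t ≤ u j := le_csSup (hAbdd j) this
    linarith
  have hueq : ∀ j : ℕ, 2 * r * j < g xm → g (u j) = 2 * r * j := by
    intro j hj
    refine le_antisymm (hugle j) ?_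
    have hcw : Filter.Tendsto g (𝓝[>] (u j)) (𝓝 (g (u j))) :=
      (hg.continuousAt).continuousWithinAt.tendsto
    have hev : ∀ᶠ t in 𝓝[>] (u j), 2 * r * j ≤ g t := by
      have hmem : Set.Ioo (u j) xm ∈ 𝓝[>] (u j) :=
        Ioo_mem_nhdsGT_of_mem ⟨le_rfl, hult j hj⟩
      filter_upwards [hmem] with t ht
      exact (habove j t ht.1 ht.2.le).le
    exact ge_of_tendsto hcw hev
  -- pairwise distances
  have hdist : ∀ i j : ℕ, i < j → j < K → 2 * r * (j - i : ℕ) ≤ treeDist g (u i) (u j) := by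
    intro i j hij hjK
    have hiK : 2 * r * i < g xm := hK i (by omega)
    have hjK' : 2 * r * j < g xm := hK j hjK
    have hle : u i ≤ u j := humono i j hij.le
    have hinf : sInf (g '' Set.uIcc (u i) (u j)) = 2 * r * i := by
      refine le_antisymm ?_ ?_
      · have := sInf_img_le hg (Set.left_mem_uIcc (a := u i) (b := u j))
        rw [hueq i hiK] at this
        exact this
      · refine le_csInf (Set.nonempty_uIcc.image g) ?_
        rintro b ⟨t, ht, rfl⟩
        rw [Set.uIcc_of_le hle] at ht
        rcases eq_or_lt_of_le ht.1 with he | hl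
        · rw [← he, hueq i hiK]
        · exact (habove i t hl (le_trans ht.2 (huIcc j).2)).le
    unfold treeDist
    rw [hinf, hueq i hiK, hueq j hjK']
    have : ((j - i : ℕ) : ℝ) = (j : ℝ) - i := by
      have : i ≤ j := hij.le
      push_cast [Nat.cast_sub this]
      ring
    rw [this]
    ring_nf
    nlinarith [hr]
  have hsep : ∀ i j : ℕ, i < K → j < K → i ≠ j → r < treeDist g (u i) (u j) := by
    intro i j hi hj hij
    rcases lt_or_gt_of_ne hij with hlt | hlt
    · have := hdist i j hlt hj
      have h1 : (1:ℝ) ≤ ((j - i : ℕ) : ℝ) := by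
        have : 1 ≤ j - i := by omega
        exact_mod_cast this
      nlinarith
    · have := hdist j i hlt hi
      rw [treeDist_comm] at this
      have h1 : (1:ℝ) ≤ ((i - j : ℕ) : ℝ) := by
        have : 1 ≤ i - j := by omega
        exact_mod_cast this
      nlinarith
  have huinj : ∀ i j : ℕ, i < K → j < K → i ≠ j → u i ≠ u j := by
    intro i j hi hj hij he
    have := hsep i j hi hj hij
    rw [he, treeDist_self] at this
    linarith
  refine le_Nsep hg hr ⟨(Finset.range K).image (fun j => u j), ?_, ?_, ?_⟩
  · intro t ht
    simp only [Finset.coe_image, Set.mem_image, Finset.mem_coe, Finset.mem_range] at ht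
    obtain ⟨j, -, rfl⟩ := ht
    exact ⟨(huIcc j).1, le_trans (huIcc j).2 hxm.2⟩
  · rw [Finset.card_image_of_injOn, Finset.card_range]
    intro i hi j hj hij
    simp only [Finset.coe_range, Set.mem_Iio] at hi hj
    by_contra hne
    exact huinj i j hi hj hne hij
  · intro a ha b hb hab
    simp only [Finset.mem_image, Finset.mem_range] at ha hb
    obtain ⟨i, hi, rfl⟩ := ha
    obtain ⟨j, hj, rfl⟩ := hb
    refine hsep i j hi hj ?_
    intro he
    exact hab (he ▸ rfl)

end Levels


section Dim

lemma ubdOf_le_of_poly (N : ℝ → ℕ) {q C r₀ : ℝ} (hq : 0 ≤ q) (hC : 1 ≤ C) (hr₀ : 0 < r₀)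
    (h : ∀ r : ℝ, 0 < r → r < r₀ → (N r : ℝ) ≤ C * r ^ (-q)) :
    ubdOf N ≤ ENNReal.ofReal q := by
  refine ENNReal.le_of_forall_pos_le_add fun ε hε _ => ?_
  have hεR : (0:ℝ) < (ε:ℝ) := hε
  have hlogC : 0 ≤ Real.log C := Real.log_nonneg hC
  set δ := min r₀ (min 1 (Real.exp (-(Real.log C / ε)))) with hδ
  have hδpos : 0 < δ := lt_min hr₀ (lt_min one_pos (Real.exp_pos _))
  have hev : ∀ᶠ r in 𝓝[>] (0:ℝ),
      ENNReal.ofReal (Real.log (N r : ℝ) / (-Real.log r)) ≤ ENNReal.ofReal (q + ε) := by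
    filter_upwards [Ioo_mem_nhdsGT_of_mem (Set.mem_Ico.2 ⟨le_rfl, hδpos⟩)] with r hr
    obtain ⟨hr0, hrδ⟩ := hr
    have hr1 : r < 1 := lt_of_lt_of_le hrδ ((min_le_right _ _).trans (min_le_left _ _))
    have hlogr : 0 < -Real.log r := by
      rw [neg_pos]
      exact Real.log_neg hr0 hr1
    have hre : r ≤ Real.exp (-(Real.log C / ε)) :=
      hrδ.le.trans ((min_le_right _ _).trans (min_le_right _ _))
    have hC' : Real.log C ≤ (ε:ℝ) * (-Real.log r) := by
      have h1 : Real.log r ≤ -(Real.log C / ε) := by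
        calc Real.log r ≤ Real.log (Real.exp (-(Real.log C / ε))) :=
              Real.log_le_log hr0 hre
          _ = -(Real.log C / ε) := Real.log_exp _
      rw [← div_le_iff₀' hεR] at *
      nlinarith
    have hNbound : Real.log (N r : ℝ) ≤ Real.log C + q * (-Real.log r) := by
      rcases Nat.eq_zero_or_pos (N r) with h0 | h0
      · rw [h0]
        simp only [Nat.cast_zero, Real.log_zero]
        positivity
      · have hN1 : (1:ℝ) ≤ (N r : ℝ) := by exact_mod_cast h0
        have hrp : (0:ℝ) < r ^ (-q) := Real.rpow_pos_of_pos hr0 _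
        calc Real.log (N r : ℝ) ≤ Real.log (C * r ^ (-q)) :=
              Real.log_le_log (by linarith) (h r hr0 (lt_of_lt_of_le hrδ (min_le_left _ _)))
          _ = Real.log C + (-q) * Real.log r := by
              rw [Real.log_mul (by linarith) hrp.ne', Real.log_rpow hr0]
          _ = Real.log C + q * (-Real.log r) := by ring
    have hratio : Real.log (N r : ℝ) / (-Real.log r) ≤ q + ε := by
      rw [div_le_iff₀ hlogr]
      nlinarith
    exact ENNReal.ofReal_le_ofReal hratio
  calc ubdOf N ≤ ENNReal.ofReal (q + ε) := Filter.limsup_le_of_le (by isBoundedDefault) hev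
    _ = ENNReal.ofReal q + ENNReal.ofReal (ε:ℝ) := ENNReal.ofReal_add hq hεR.le
    _ = ENNReal.ofReal q + (ε : ℝ≥0∞) := by rw [ENNReal.ofReal_coe_nnreal]

lemma le_ubdOf_of_poly (N : ℝ → ℕ) {q cc r₀ : ℝ} (hq : 0 ≤ q) (hc : 0 < cc) (hr₀ : 0 < r₀)
    (h : ∀ r : ℝ, 0 < r → r < r₀ → cc * r ^ (-q) ≤ (N r : ℝ)) :
    ENNReal.ofReal q ≤ ubdOf N := by
  refine ENNReal.le_of_forall_pos_le_add fun ε hε _ => ?_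
  have hεR : (0:ℝ) < (ε:ℝ) := hε
  rcases le_or_gt q (ε:ℝ) with hqε | hqε
  · calc ENNReal.ofReal q ≤ (ε : ℝ≥0∞) := by
          rw [← ENNReal.ofReal_coe_nnreal]
          exact ENNReal.ofReal_le_ofReal hqε
      _ ≤ ubdOf N + ε := le_add_self
  · set δ := min r₀ (min 1 (Real.exp (-(|Real.log cc| / ε)))) with hδ
    have hδpos : 0 < δ := lt_min hr₀ (lt_min one_pos (Real.exp_pos _))
    have hev : ∀ᶠ r in 𝓝[>] (0:ℝ), ENNReal.ofReal (q - ε) ≤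
        ENNReal.ofReal (Real.log (N r : ℝ) / (-Real.log r)) := by
      filter_upwards [Ioo_mem_nhdsGT_of_mem (Set.mem_Ico.2 ⟨le_rfl, hδpos⟩)] with r hr
      obtain ⟨hr0, hrδ⟩ := hr
      have hr1 : r < 1 := lt_of_lt_of_le hrδ ((min_le_right _ _).trans (min_le_left _ _))
      have hlogr : 0 < -Real.log r := by
        rw [neg_pos]
        exact Real.log_neg hr0 hr1
      have hre : r ≤ Real.exp (-(|Real.log cc| / ε)) :=
        hrδ.le.trans ((min_le_right _ _).trans (min_le_right _ _))
      have hC' : |Real.log cc| ≤ (ε:ℝ) * (-Real.log r) := by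
        have h1 : Real.log r ≤ -(|Real.log cc| / ε) := by
          calc Real.log r ≤ Real.log (Real.exp (-(|Real.log cc| / ε))) :=
                Real.log_le_log hr0 hre
            _ = -(|Real.log cc| / ε) := Real.log_exp _
        have h2 : |Real.log cc| / ε ≤ -Real.log r := by linarith
        calc |Real.log cc| = (|Real.log cc| / ε) * ε := by field_simp
          _ ≤ (-Real.log r) * ε := by
              apply mul_le_mul_of_nonneg_right h2 hεR.le
          _ = (ε:ℝ) * (-Real.log r) := by ring
      have hrp : (0:ℝ) < r ^ (-q) := Real.rpow_pos_of_pos hr0 _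
      have hNpos : (0:ℝ) < (N r : ℝ) := lt_of_lt_of_le (by positivity) (h r hr0
        (lt_of_lt_of_le hrδ (min_le_left _ _)))
      have hlogN : Real.log cc + q * (-Real.log r) ≤ Real.log (N r : ℝ) := by
        calc Real.log cc + q * (-Real.log r) = Real.log (cc * r ^ (-q)) := by
              rw [Real.log_mul hc.ne' hrp.ne', Real.log_rpow hr0]
              ring
          _ ≤ Real.log (N r : ℝ) := Real.log_le_log (by positivity)
              (h r hr0 (lt_of_lt_of_le hrδ (min_le_left _ _)))
      have hratio : q - ε ≤ Real.log (N r : ℝ) / (-Real.log r) := by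
        rw [le_div_iff₀ hlogr]
        have habs : -|Real.log cc| ≤ Real.log cc := neg_abs_le _
        nlinarith
      exact ENNReal.ofReal_le_ofReal hratio
    have hlim : ENNReal.ofReal (q - ε) ≤
        Filter.liminf (fun r : ℝ => ENNReal.ofReal (Real.log (N r : ℝ) / (-Real.log r)))
          (𝓝[>] (0:ℝ)) := Filter.le_liminf_of_le (by isBoundedDefault) hev
    have hll : Filter.liminf (fun r : ℝ => ENNReal.ofReal (Real.log (N r : ℝ) / (-Real.log r)))
        (𝓝[>] (0:ℝ)) ≤ ubdOf N := Filter.liminf_le_limsup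
    calc ENNReal.ofReal q = ENNReal.ofReal ((q - ε) + ε) := by ring_nf
      _ = ENNReal.ofReal (q - ε) + ENNReal.ofReal (ε:ℝ) :=
          ENNReal.ofReal_add (by linarith) hεR.le
      _ ≤ ubdOf N + ENNReal.ofReal (ε:ℝ) := add_le_add_left (hlim.trans hll) _
      _ = ubdOf N + (ε : ℝ≥0∞) := by rw [ENNReal.ofReal_coe_nnreal]

lemma poly_of_ubdOf_lt (N : ℝ → ℕ) {q : ℝ} (hq : 0 < q)
    (hlt : ubdOf N < ENNReal.ofReal q) :
    ∃ r₀ : ℝ, 0 < r₀ ∧ r₀ ≤ 1 ∧ ∀ r, 0 < r → r < r₀ → (N r : ℝ) ≤ r ^ (-q) := by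
  have hev := Filter.eventually_lt_of_limsup_lt hlt
  have hev2 : ∀ᶠ r in 𝓝[>] (0:ℝ), r ∈ Set.Ioo (0:ℝ) 1 :=
    Ioo_mem_nhdsGT_of_mem (Set.mem_Ico.2 ⟨le_rfl, one_pos⟩)
  obtain ⟨u, hu, hsub⟩ := mem_nhdsGT_iff_exists_Ioo_subset.1 (hev.and hev2)
  refine ⟨min u 1, lt_min hu one_pos, min_le_right _ _, fun r hr0 hrlt => ?_⟩
  obtain ⟨hlt', hIoo⟩ := hsub ⟨hr0, lt_of_lt_of_le hrlt (min_le_left _ _)⟩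
  have hratio : Real.log (N r : ℝ) / (-Real.log r) < q :=
    (ENNReal.ofReal_lt_ofReal_iff hq).1 hlt'
  have hlogr : 0 < -Real.log r := by
    rw [neg_pos]
    exact Real.log_neg hr0 hIoo.2
  rcases Nat.eq_zero_or_pos (N r) with h0 | h0
  · rw [h0]
    simp only [Nat.cast_zero]
    positivity
  · have hN1 : (0:ℝ) < (N r : ℝ) := by exact_mod_cast h0
    have hlog : Real.log (N r : ℝ) < q * (-Real.log r) := by
      rwa [div_lt_iff₀ hlogr] at hratio
    have hrp : (0:ℝ) < r ^ (-q) := Real.rpow_pos_of_pos hr0 _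
    have h2 : Real.log (N r : ℝ) < Real.log (r ^ (-q)) := by
      rw [Real.log_rpow hr0]
      nlinarith
    exact ((Real.log_lt_log_iff hN1 hrp).1 h2).le

end Dim


section Multiscale

/-- If the number of `s`-big increments of any partition is `≲ s^{-q}` then the
`p`-variation is finite for `p > q`. -/
lemma multiscale_bound {f : ℝ → ℝ} {p q G A : ℝ}
    (hq1 : 1 ≤ q) (hqp : q < p) (hG : 1 ≤ G) (hA : 1 ≤ A)
    (hosc : ∀ u ∈ Set.Icc (0:ℝ) 1, ∀ v ∈ Set.Icc (0:ℝ) 1, |f u - f v| ≤ G)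
    (hcnt : ∀ s : ℝ, 0 < s → ∀ n (x : Fin (n+1) → ℝ), IsPartition n x →
      (bigCount f s n x : ℝ) ≤ A * s ^ (-q) + A) :
    ∃ B : ℝ, ∀ n (x : Fin (n+1) → ℝ), IsPartition n x → varSum f p n x ≤ B := by
  classical
  have hGpos : (0:ℝ) < G := by linarith
  have h2pos : (0:ℝ) < 2 := two_pos
  set ρ1 : ℝ := (2:ℝ) ^ (q - p) with hρ1
  set ρ2 : ℝ := (2:ℝ) ^ (-p) with hρ2
  have hρ1pos : 0 < ρ1 := Real.rpow_pos_of_pos h2pos _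
  have hρ2pos : 0 < ρ2 := Real.rpow_pos_of_pos h2pos _
  have hρ1lt : ρ1 < 1 := Real.rpow_lt_one_of_one_lt_of_neg one_lt_two (by linarith)
  have hρ2lt : ρ2 < 1 := Real.rpow_lt_one_of_one_lt_of_neg one_lt_two (by linarith)
  set C1 : ℝ := A * G ^ (p - q) * (2:ℝ) ^ q with hC1
  set C2 : ℝ := A * G ^ p with hC2
  have hC1pos : 0 < C1 := by
    have := Real.rpow_pos_of_pos hGpos (p - q)
    have := Real.rpow_pos_of_pos h2pos q
    positivity
  have hC2pos : 0 < C2 := by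
    have := Real.rpow_pos_of_pos hGpos p
    positivity
  refine ⟨C1 * (1 - ρ1)⁻¹ + C2 * (1 - ρ2)⁻¹, ?_⟩
  intro n x hx
  set Δ : Fin n → ℝ := fun i => |f (x i.castSucc) - f (x i.succ)| with hΔ
  have hΔnonneg : ∀ i, 0 ≤ Δ i := fun i => abs_nonneg _
  have hΔle : ∀ i, Δ i ≤ G := fun i => hosc _ (hx.2 _) _ (hx.2 _)
  set P : Finset (Fin n) := Finset.univ.filter (fun i => 0 < Δ i) with hP
  set k : Fin n → ℕ := fun i => Nat.log 2 ⌊G / Δ i⌋₊ with hk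
  have hbucket : ∀ i ∈ P, G * (2:ℝ) ^ (-(k i : ℝ) - 1) < Δ i ∧
      Δ i ≤ G * (2:ℝ) ^ (-(k i : ℝ)) := by
    intro i hi
    simp only [hP, Finset.mem_filter, Finset.mem_univ, true_and] at hi
    have ht1 : (1:ℝ) ≤ G / Δ i := (one_le_div hi).2 (hΔle i)
    have htpos : (0:ℝ) < G / Δ i := by positivity
    have hfl1 : 1 ≤ ⌊G / Δ i⌋₊ := (Nat.one_le_floor_iff _).2 ht1
    have d1 : ((2:ℝ))^(k i) ≤ G / Δ i := by
      have h1 : (2:ℕ)^(k i) ≤ ⌊G / Δ i⌋₊ := Nat.pow_log_le_self 2 (by omega)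
      calc ((2:ℝ))^(k i) = ((2^(k i) : ℕ) : ℝ) := by push_cast; ring
        _ ≤ (⌊G / Δ i⌋₊ : ℝ) := by exact_mod_cast h1
        _ ≤ G / Δ i := Nat.floor_le htpos.le
    have d2 : G / Δ i < ((2:ℝ))^(k i + 1) := by
      have h1 : ⌊G / Δ i⌋₊ < 2^(k i + 1) := Nat.lt_pow_succ_log_self one_lt_two _
      calc G / Δ i < (⌊G / Δ i⌋₊ : ℝ) + 1 := Nat.lt_floor_add_one _
        _ ≤ ((2:ℝ))^(k i + 1) := by exact_mod_cast Nat.succ_le_of_lt h1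
    have hpk : (0:ℝ) < (2:ℝ)^(k i) := by positivity
    have hpk1 : (0:ℝ) < (2:ℝ)^(k i + 1) := by positivity
    have e1 : (2:ℝ) ^ (-(k i : ℝ)) = ((2:ℝ)^(k i))⁻¹ := by
      rw [Real.rpow_neg (by norm_num), Real.rpow_natCast]
    have e2 : (2:ℝ) ^ (-(k i : ℝ) - 1) = ((2:ℝ)^(k i + 1))⁻¹ := by
      rw [show -(k i : ℝ) - 1 = -(((k i + 1 : ℕ)):ℝ) by push_cast; ring,
        Real.rpow_neg (by norm_num), Real.rpow_natCast]
    constructor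
    · rw [e2]
      rw [div_lt_iff₀ hi] at d2
      rw [mul_inv_lt_iff₀ hpk1]
      nlinarith
    · rw [e1]
      rw [le_div_iff₀ hi] at d1
      rw [le_mul_inv_iff₀ hpk]
      nlinarith
  have hppos : (0:ℝ) < p := by linarith
  have hsum1 : varSum f p n x = ∑ i ∈ P, (Δ i) ^ p := by
    unfold varSum
    rw [eq_comm, hP]
    apply Finset.sum_filter_of_ne
    intro i _ hne
    rcases lt_or_eq_of_le (hΔnonneg i) with h | h
    · exact h
    · exfalso
      apply hne
      rw [hΔ] at h ⊢
      rw [← h, Real.zero_rpow hppos.ne']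
  have hsum2 : ∑ i ∈ P, (Δ i)^p ≤ ∑ i ∈ P, (G * (2:ℝ)^(-(k i:ℝ)))^p :=
    Finset.sum_le_sum fun i hi =>
      Real.rpow_le_rpow (hΔnonneg i) (hbucket i hi).2 hppos.le
  have hsum3 : ∑ i ∈ P, (G * (2:ℝ)^(-(k i:ℝ)))^p
      = ∑ b ∈ P.image k, ((P.filter (fun i => k i = b)).card : ℝ)
          * (G * (2:ℝ)^(-(b:ℝ)))^p := by
    rw [Finset.sum_comp (fun b : ℕ => (G * (2:ℝ)^(-(b:ℝ)))^p) k]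
    exact Finset.sum_congr rfl fun b _ => by rw [nsmul_eq_mul]
  have hcard : ∀ b ∈ P.image k, ((P.filter (fun i => k i = b)).card : ℝ)
      ≤ A * (G * (2:ℝ)^(-(b:ℝ)-1))^(-q) + A := by
    intro b _
    have hsb : (0:ℝ) < G * (2:ℝ)^(-(b:ℝ)-1) := by positivity
    refine le_trans ?_ (hcnt _ hsb n x hx)
    have hsubset : P.filter (fun i => k i = b) ⊆ bigSet f (G * (2:ℝ)^(-(b:ℝ)-1)) n x := by
      intro i hi
      simp only [Finset.mem_filter] at hi
      obtain ⟨hiP, hib⟩ := hi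
      have hbk := (hbucket i hiP).1
      rw [hib] at hbk
      simp only [Finset.mem_coe, bigSet, Finset.mem_filter, Finset.mem_univ, true_and]
      exact hbk
    exact Nat.cast_le.2 (Finset.card_le_card hsubset)
  have hterm : ∀ b : ℕ, (A * (G * (2:ℝ)^(-(b:ℝ)-1))^(-q) + A) * (G * (2:ℝ)^(-(b:ℝ)))^p
      = C1 * ρ1 ^ b + C2 * ρ2 ^ b := by
    intro b
    have hb2 : (0:ℝ) ≤ 2 := by norm_num
    have h2ne : ((2:ℝ)^(-(b:ℝ)-1)) ≥ 0 := (Real.rpow_pos_of_pos h2pos _).le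
    have h2ne' : ((2:ℝ)^(-(b:ℝ))) ≥ 0 := (Real.rpow_pos_of_pos h2pos _).le
    rw [Real.mul_rpow hGpos.le h2ne, Real.mul_rpow hGpos.le h2ne',
      ← Real.rpow_natCast ρ1 b, ← Real.rpow_natCast ρ2 b, hρ1, hρ2,
      ← Real.rpow_mul hb2, ← Real.rpow_mul hb2, ← Real.rpow_mul hb2, ← Real.rpow_mul hb2,
      hC1, hC2]
    rw [show (p - q) = p + (-q) by ring, Real.rpow_add hGpos]
    rw [add_mul, mul_comm A (G ^ (-q) * _)]
    have comb : ∀ a c : ℝ, (2:ℝ)^a * (2:ℝ)^c = (2:ℝ)^(a+c) := fun a c =>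
      (Real.rpow_add h2pos a c).symm
    ring_nf
    have e : (2:ℝ)^(q + q*(b:ℝ)) * (2:ℝ)^(-((b:ℝ)*p))
        = (2:ℝ)^q * (2:ℝ)^(q*(b:ℝ) - (b:ℝ)*p) := by
      rw [comb, comb]
      congr 1
      ring
    linear_combination (G^(-q)*A*G^p) * e
  set M := (P.image k).sup id + 1 with hM
  have himg : P.image k ⊆ Finset.range M := by
    intro b hb
    simp only [Finset.mem_range, hM]
    have h := Finset.le_sup (f := id) hb
    simp only [id] at h
    omega
  have hsum4 : ∑ b ∈ P.image k, ((P.filter (fun i => k i = b)).card : ℝ)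
        * (G * (2:ℝ)^(-(b:ℝ)))^p
      ≤ ∑ b ∈ Finset.range M, (C1 * ρ1 ^ b + C2 * ρ2 ^ b) := by
    refine le_trans (Finset.sum_le_sum ?_) (Finset.sum_le_sum_of_subset_of_nonneg himg ?_)
    · intro b hb
      rw [← hterm b]
      exact mul_le_mul_of_nonneg_right (hcard b hb) (Real.rpow_nonneg (by positivity) p)
    · intro b _ _
      positivity
  have hgeom : ∀ ρ : ℝ, 0 ≤ ρ → ρ < 1 → ∑ b ∈ Finset.range M, ρ^b ≤ (1-ρ)⁻¹ := by
    intro ρ h0 h1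
    have hs := summable_geometric_of_lt_one h0 h1
    have := hs.sum_le_tsum (Finset.range M) (fun b _ => pow_nonneg h0 b)
    rwa [tsum_geometric_of_lt_one h0 h1] at this
  have hsum5 : ∑ b ∈ Finset.range M, (C1 * ρ1 ^ b + C2 * ρ2 ^ b)
      ≤ C1 * (1 - ρ1)⁻¹ + C2 * (1 - ρ2)⁻¹ := by
    rw [Finset.sum_add_distrib, ← Finset.mul_sum, ← Finset.mul_sum]
    have g1 := hgeom ρ1 hρ1pos.le hρ1lt
    have g2 := hgeom ρ2 hρ2pos.le hρ2lt
    have m1 := mul_le_mul_of_nonneg_left g1 hC1pos.le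
    have m2 := mul_le_mul_of_nonneg_left g2 hC2pos.le
    linarith
  calc varSum f p n x = ∑ i ∈ P, Δ i ^ p := hsum1
    _ ≤ ∑ i ∈ P, (G * (2:ℝ)^(-(k i:ℝ)))^p := hsum2
    _ = ∑ b ∈ P.image k, ((P.filter (fun i => k i = b)).card : ℝ)
          * (G * (2:ℝ)^(-(b:ℝ)))^p := hsum3
    _ ≤ ∑ b ∈ Finset.range M, (C1 * ρ1 ^ b + C2 * ρ2 ^ b) := hsum4
    _ ≤ C1 * (1 - ρ1)⁻¹ + C2 * (1 - ρ2)⁻¹ := hsum5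

end Multiscale


section Wrap

variable {f : ℝ → ℝ} {a : ℝ}

/-- Counting big increments of `f` by those of the shifted excursion `g`. -/
lemma wrap_fg (hf : Continuous f) (hper : ∀ x, f (x + 1) = f x)
    (ha : a ∈ Set.Icc (0:ℝ) 1) {s : ℝ} (hs : 0 < s) {n : ℕ} {x : Fin (n+1) → ℝ}
    (hx : IsPartition n x) :
    bigCount f s n x ≤ 2 * Dmax (fun t => f (t + a) - f a) s + 1 := by
  have hg : Continuous (fun t => f (t + a) - f a) :=
    (hf.comp (continuous_id.add continuous_const)).sub continuous_const
  refine splitCount (c := a) (C := f a) (φ₁ := fun t => t + (1 - a)) (φ₂ := fun t => t - a)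
    hg hs (StrictMono.add_const strictMono_id _) ?_ ?_ ?_ hx
  · intro u v huv
    simpa using huv
  · intro t ht htc
    simp only [Set.mem_Icc] at ht
    have h1 := ha.1
    have h2 := ha.2
    constructor
    · show t + (1 - a) ∈ Set.Icc (0:ℝ) 1
      simp only [Set.mem_Icc]
      constructor <;> linarith
    · show f t = (f ((t + (1 - a)) + a) - f a) + f a
      rw [show t + (1 - a) + a = t + 1 by ring, hper t]
      ring
  · intro t ht htc
    simp only [Set.mem_Icc] at ht
    have h1 := ha.1
    have h2 := ha.2
    constructor
    · show t - a ∈ Set.Icc (0:ℝ) 1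
      simp only [Set.mem_Icc]
      constructor <;> linarith
    · show f t = (f ((t - a) + a) - f a) + f a
      rw [show t - a + a = t by ring]
      ring

/-- Counting big increments of the excursion by those of `f`. -/
lemma wrap_gf (hf : Continuous f) (hper : ∀ x, f (x + 1) = f x)
    (ha : a ∈ Set.Icc (0:ℝ) 1) {s : ℝ} (hs : 0 < s) {n : ℕ} {x : Fin (n+1) → ℝ}
    (hx : IsPartition n x) :
    bigCount (fun t => f (t + a) - f a) s n x ≤ 2 * Dmax f s + 1 := by
  refine splitCount (c := 1 - a) (C := -(f a)) (φ₁ := fun t => t + a)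
    (φ₂ := fun t => t + (a - 1)) hf hs (StrictMono.add_const strictMono_id _)
    (StrictMono.add_const strictMono_id _) ?_ ?_ hx
  · intro t ht htc
    simp only [Set.mem_Icc] at ht
    have h1 := ha.1
    have h2 := ha.2
    constructor
    · show t + a ∈ Set.Icc (0:ℝ) 1
      simp only [Set.mem_Icc]
      constructor <;> linarith
    · show f (t + a) - f a = f (t + a) + -(f a)
      ring
  · intro t ht htc
    simp only [Set.mem_Icc] at ht
    have h1 := ha.1
    have h2 := ha.2
    constructor
    · show t + (a - 1) ∈ Set.Icc (0:ℝ) 1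
      simp only [Set.mem_Icc]
      constructor <;> linarith
    · show f (t + a) - f a = f (t + (a - 1)) + -(f a)
      rw [show t + a = (t + (a - 1)) + 1 by ring, hper (t + (a - 1))]
      ring

/-- The excursion attains a positive value somewhere in `[0,1]`. -/
lemma excursion_pos (hf : Continuous f) (hper : ∀ x, f (x + 1) = f x)
    (hnc : ∃ x y, f x ≠ f y) (ha : a ∈ Set.Icc (0:ℝ) 1)
    (hmin : ∀ x ∈ Set.Icc (0:ℝ) 1, f a ≤ f x) :
    ∃ t ∈ Set.Icc (0:ℝ) 1, 0 < f (t + a) - f a := by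
  have hperiodic : Function.Periodic f 1 := hper
  have hint : ∀ (w : ℝ), f w = f (Int.fract w) := by
    intro w
    have := hperiodic.sub_int_mul_eq (x := w) ⌊w⌋
    rw [mul_one] at this
    exact this.symm
  obtain ⟨x₀, y₀, hxy⟩ := hnc
  have hw : ∃ w, f w ≠ f a := by
    by_cases h : f x₀ = f a
    · exact ⟨y₀, fun hy => hxy (h.trans hy.symm)⟩
    · exact ⟨x₀, h⟩
  obtain ⟨w, hwne⟩ := hw
  have hwge : f a ≤ f w := by
    rw [hint w]
    exact hmin _ ⟨Int.fract_nonneg w, (Int.fract_lt_one w).le⟩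
  have hwgt : f a < f w := lt_of_le_of_ne hwge (fun h => hwne h.symm)
  refine ⟨Int.fract (w - a), ⟨Int.fract_nonneg _, (Int.fract_lt_one _).le⟩, ?_⟩
  have harg : Int.fract (w - a) + a = w - ⌊w - a⌋ := by
    rw [Int.fract]
    ring
  rw [harg]
  have : f (w - ⌊w - a⌋) = f w := by
    have := hperiodic.sub_int_mul_eq (x := w) ⌊w - a⌋
    rw [mul_one] at this
    exact this
  rw [this]
  linarith

end Wrap

end PicardAux

noncomputable section

set_option maxHeartbeats 2000000 in
/-- **Picard's theorem.** For a non-constant continuous circle mapping `f` (modelled as a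
1-periodic continuous function on `ℝ`), the upper box dimension of the real tree `T(f)`
(the tree of the excursion `x ↦ f(x + a) - f(a)`, `a` a minimizer of `f`) equals the
variation index `I(f)`. -/
theorem picard_ubd_tree_eq_varIndex (f : ℝ → ℝ) (hf : Continuous f)
    (hper : ∀ x, f (x + 1) = f x) (hnc : ∃ x y, f x ≠ f y)
    (a : ℝ) (ha : a ∈ Set.Icc (0 : ℝ) 1) (hmin : ∀ x ∈ Set.Icc (0 : ℝ) 1, f a ≤ f x) :
    ubdTree (fun x => f (x + a) - f a) = varIndex f := by
  obtain ⟨g, hgdef⟩ : ∃ g' : ℝ → ℝ, g' = fun x => f (x + a) - f a := ⟨_, rfl⟩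
  rw [show (fun x => f (x + a) - f a) = g from hgdef.symm]
  have hg : Continuous g := by
    rw [hgdef]
    exact (hf.comp (continuous_id.add continuous_const)).sub continuous_const
  obtain ⟨xm, hxm, hxmax⟩ := isCompact_Icc.exists_isMaxOn
    (⟨0, by norm_num⟩ : (Set.Icc (0:ℝ) 1).Nonempty) hg.continuousOn
  obtain ⟨t₀, ht₀, ht₀pos⟩ := excursion_pos hf hper hnc ha hmin
  have hS : 0 < g xm := by
    refine lt_of_lt_of_le ht₀pos ?_
    have := hxmax ht₀
    rwa [hgdef] at this ⊢
  have hg0 : g 0 = 0 := by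
    rw [hgdef]
    show f (0 + a) - f a = 0
    rw [zero_add]
    ring
  -- (IIa) : 1 ≤ ubdTree g
  have hN1 : (1:ℝ≥0∞) ≤ ubdTree g := by
    rw [← ENNReal.ofReal_one]
    refine le_ubdOf_of_poly _ (by norm_num) (show (0:ℝ) < g xm / 4 by linarith)
      (show (0:ℝ) < g xm / 4 by linarith) ?_
    intro r hr0 hrlt
    have h2r : 2 * r < g xm := by linarith
    have hK : ∀ j : ℕ, j < ⌊g xm / (2*r)⌋₊ → 2 * r * j < g xm := by
      intro j hj
      have hjle : (j:ℝ) ≤ (⌊g xm / (2*r)⌋₊ : ℝ) - 1 := by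
        have : (j:ℝ) + 1 ≤ (⌊g xm / (2*r)⌋₊ : ℝ) := by exact_mod_cast hj
        linarith
      have hfl : (⌊g xm / (2*r)⌋₊ : ℝ) ≤ g xm / (2*r) := Nat.floor_le (by positivity)
      have : (j:ℝ) ≤ g xm / (2*r) - 1 := by linarith
      have h2rpos : (0:ℝ) < 2*r := by linarith
      calc 2*r*(j:ℝ) ≤ 2*r*(g xm / (2*r) - 1) := by nlinarith
        _ = g xm - 2*r := by field_simp
        _ < g xm := by linarith
    have hlev := levels_le_Nsep hg hg0 hxm (fun t ht => hxmax ht) hr0 h2r hK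
    have hfl2 : g xm / (2*r) - 1 < (⌊g xm / (2*r)⌋₊ : ℝ) := Nat.sub_one_lt_floor _
    have hquarter : g xm / 4 * r ^ (-1 : ℝ) ≤ (⌊g xm / (2*r)⌋₊ : ℝ) := by
      rw [Real.rpow_neg_one]
      have hx4 : (0:ℝ) < 4*r := by linarith
      have hgt1 : 1 < g xm/(4*r) := by
        rw [lt_div_iff₀ hx4]
        linarith
      have heq : g xm/(2*r) = 2 * (g xm/(4*r)) := by
        field_simp
        ring
      have hmain : g xm/(4*r) ≤ g xm/(2*r) - 1 := by
        rw [heq]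
        linarith
      have hrw : g xm / 4 * r⁻¹ = g xm / (4*r) := by
        field_simp
      rw [hrw]
      linarith
    calc g xm / 4 * r ^ (-1:ℝ) ≤ (⌊g xm / (2*r)⌋₊ : ℝ) := hquarter
      _ ≤ _ := by exact_mod_cast hlev
  -- Direction (I): ubdTree g ≤ varIndex f
  have hle1 : ubdTree g ≤ varIndex f := by
    refine ENNReal.le_of_forall_pos_le_add fun ε hε hlt => ?_
    have hεR : (0:ℝ) < (ε:ℝ) := hε
    have h1le : (1:ℝ≥0∞) ≤ varIndex f := le_sup_left
    have htR : 1 ≤ (varIndex f).toReal := by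
      have := ENNReal.toReal_mono hlt.ne h1le
      rwa [ENNReal.toReal_one] at this
    set q := (varIndex f).toReal + (ε:ℝ) with hqdef
    have hq1 : 1 ≤ q := by linarith
    have hq0 : (0:ℝ) ≤ q := by linarith
    have hofq : ENNReal.ofReal q = varIndex f + ENNReal.ofReal (ε:ℝ) := by
      rw [ENNReal.ofReal_add (by linarith) hεR.le, ENNReal.ofReal_toReal hlt.ne]
    have hfin : pVar f q ≠ ⊤ := by
      intro htop
      have hle : ENNReal.ofReal q ≤ varIndex f :=
        le_sup_of_le_right (le_iSup_of_le q (le_iSup_of_le hq1 (le_iSup_of_le htop le_rfl)))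
      rw [hofq] at hle
      have hlt2 : varIndex f < varIndex f + ENNReal.ofReal (ε:ℝ) :=
        ENNReal.lt_add_right hlt.ne (ENNReal.ofReal_pos.2 hεR).ne'
      exact absurd hle (not_le.2 hlt2)
    set V := (pVar f q).toReal with hV
    have hVnn : (0:ℝ) ≤ V := ENNReal.toReal_nonneg
    have h4q : (0:ℝ) < (4:ℝ)^(q:ℝ) := Real.rpow_pos_of_pos (by norm_num) _
    set Cq := max 1 (2*V*(4:ℝ)^(q:ℝ) + 2) with hCq
    have hkey : ∀ r : ℝ, 0 < r → r < 1 →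
        ((Nsep (treeDist g) (Set.Icc 0 1) r : ℕ) : ℝ) ≤ Cq * r^(-q) := by
      intro r hr0 hr1
      have c1 : Nsep (treeDist g) (Set.Icc 0 1) r ≤ Dmax g (r/2/2) + 1 :=
        Nsep_le_Dmax_succ hg hr0
      have c2 : Dmax g (r/2/2) ≤ 2 * Dmax f (r/2/2) + 1 := by
        refine Dmax_le fun K hK => ?_
        obtain ⟨n, x, hx, rfl⟩ := hK
        rw [hgdef]
        exact wrap_gf hf hper ha (by positivity) hx
      have c3 : (Dmax f (r/2/2) : ℝ) ≤ V / (r/2/2)^q :=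
        Dmax_le_of_pVar_finite hq0 (by positivity) hfin
      have hrq : (1:ℝ) ≤ r^(-q) :=
        Real.one_le_rpow_of_pos_of_le_one_of_nonpos hr0 hr1.le (by linarith)
      have hrqpos : (0:ℝ) < r^(-q) := by linarith
      have hpow : (r/2/2)^q = r^q / (4:ℝ)^q := by
        rw [show r/2/2 = r/4 by ring, Real.div_rpow hr0.le (by norm_num)]
      have hrqq : (0:ℝ) < r^q := Real.rpow_pos_of_pos hr0 _
      have hdiv : V / (r/2/2)^q = V * (4:ℝ)^q * r^(-q) := by
        rw [hpow, Real.rpow_neg hr0.le]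
        field_simp
      have hcast1 : ((Nsep (treeDist g) (Set.Icc 0 1) r : ℕ) : ℝ)
          ≤ (Dmax g (r/2/2) : ℝ) + 1 := by exact_mod_cast c1
      have hcast2 : (Dmax g (r/2/2) : ℝ) ≤ 2 * (Dmax f (r/2/2) : ℝ) + 1 := by
        exact_mod_cast c2
      have hCq2 : 2*V*(4:ℝ)^(q:ℝ) + 2 ≤ Cq := le_max_right _ _
      calc ((Nsep (treeDist g) (Set.Icc 0 1) r : ℕ) : ℝ)
          ≤ (Dmax g (r/2/2) : ℝ) + 1 := hcast1
        _ ≤ 2 * (Dmax f (r/2/2) : ℝ) + 2 := by linarith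
        _ ≤ 2 * (V / (r/2/2)^q) + 2 := by linarith
        _ = 2*V*(4:ℝ)^q * r^(-q) + 2 := by rw [hdiv]; ring
        _ ≤ (2*V*(4:ℝ)^q + 2) * r^(-q) := by nlinarith
        _ ≤ Cq * r^(-q) := by nlinarith
    have hubd := ubdOf_le_of_poly (fun r => Nsep (treeDist g) (Set.Icc 0 1) r)
      hq0 (le_max_left 1 _) one_pos hkey
    calc ubdTree g ≤ ENNReal.ofReal q := hubd
      _ = varIndex f + ENNReal.ofReal (ε:ℝ) := hofq
      _ = varIndex f + (ε : ℝ≥0∞) := by rw [ENNReal.ofReal_coe_nnreal]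
  -- Direction (II): varIndex f ≤ ubdTree g
  have hge : varIndex f ≤ ubdTree g := by
    refine sup_le hN1 (iSup_le fun p => iSup_le fun hp => iSup_le fun htop => ?_)
    by_contra hcon
    push_neg at hcon
    have hfin : ubdTree g ≠ ⊤ := hcon.ne_top
    have hd1 : 1 ≤ (ubdTree g).toReal := by
      have := ENNReal.toReal_mono hfin hN1
      rwa [ENNReal.toReal_one] at this
    have hdp : (ubdTree g).toReal < p := (ENNReal.lt_ofReal_iff_toReal_lt hfin).1 hcon
    set q := ((ubdTree g).toReal + p)/2 with hqd
    have hq1 : 1 ≤ q := by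
      rw [hqd]
      linarith
    have hqp : q < p := by
      rw [hqd]
      linarith
    have hqlt : ubdTree g < ENNReal.ofReal q :=
      (ENNReal.lt_ofReal_iff_toReal_lt hfin).2 (by rw [hqd]; linarith)
    obtain ⟨r₀, hr₀pos, hr₀le, hpoly⟩ := poly_of_ubdOf_lt _ (by linarith : (0:ℝ) < q) hqlt
    set N0 : ℕ := Nsep (treeDist g) (Set.Icc 0 1) (r₀/2) with hN0
    obtain ⟨Gf, hGf⟩ := isCompact_Icc.exists_bound_of_continuousOn hf.continuousOn
    have hGf0 : (0:ℝ) ≤ Gf := le_trans (norm_nonneg _) (hGf 0 (Set.mem_Icc.2 ⟨le_rfl, zero_le_one⟩))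
    have hG1 : (1:ℝ) ≤ 2*Gf + 1 := by linarith
    have hosc : ∀ u ∈ Set.Icc (0:ℝ) 1, ∀ v ∈ Set.Icc (0:ℝ) 1,
        |f u - f v| ≤ 2*Gf + 1 := by
      intro u hu v hv
      have h1 : |f u| ≤ Gf := by
        have := hGf u hu
        rwa [Real.norm_eq_abs] at this
      have h2 : |f v| ≤ Gf := by
        have := hGf v hv
        rwa [Real.norm_eq_abs] at this
      calc |f u - f v| ≤ |f u - 0| + |0 - f v| := abs_sub_le _ _ _
        _ = |f u| + |f v| := by simp
        _ ≤ 2*Gf + 1 := by linarith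
    have h2q : (0:ℝ) < (2:ℝ)^(q:ℝ) := Real.rpow_pos_of_pos (by norm_num) _
    have hN0nn : (0:ℝ) ≤ (N0:ℝ) := Nat.cast_nonneg _
    set A := 4*(2:ℝ)^(q:ℝ) + 4*(N0:ℝ) + 1 with hAd
    have hA1 : (1:ℝ) ≤ A := by
      rw [hAd]
      linarith
    have hcnt : ∀ s : ℝ, 0 < s → ∀ n (x : Fin (n+1) → ℝ), IsPartition n x →
        (bigCount f s n x : ℝ) ≤ A * s^(-q) + A := by
      intro s hs n x hx
      have c1 : bigCount f s n x ≤ 2 * Dmax g s + 1 := by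
        rw [hgdef]
        exact wrap_fg hf hper ha hs hx
      have c2 : Dmax g s ≤ 2 * Nsep (treeDist g) (Set.Icc 0 1) (s/2) := by
        refine Dmax_le fun K hK => ?_
        obtain ⟨n', x', hx', rfl⟩ := hK
        exact bigCount_le_two_mul_Nsep hg hs hx'
      have hs2pos : (0:ℝ) < s/2 := by positivity
      have hs2q : (0:ℝ) ≤ (s/2)^(-q) := (Real.rpow_pos_of_pos hs2pos _).le
      have c3 : ((Nsep (treeDist g) (Set.Icc 0 1) (s/2) : ℕ) : ℝ) ≤ (s/2)^(-q) + (N0:ℝ) := by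
        rcases lt_or_ge (s/2) r₀ with hcase | hcase
        · have := hpoly (s/2) hs2pos hcase
          linarith
        · have hanti : Nsep (treeDist g) (Set.Icc 0 1) (s/2) ≤ N0 :=
            Nsep_antitone hg (by positivity) (by linarith)
          have : ((Nsep (treeDist g) (Set.Icc 0 1) (s/2) : ℕ) : ℝ) ≤ (N0:ℝ) := by
            exact_mod_cast hanti
          linarith
      have hs2 : (s/2)^(-q) = (2:ℝ)^(q:ℝ) * s^(-q) := by
        rw [show (s/2 : ℝ) = s * 2⁻¹ by ring,
          Real.mul_rpow hs.le (by norm_num),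
          Real.inv_rpow (by norm_num : (0:ℝ) ≤ 2), Real.rpow_neg (by norm_num : (0:ℝ) ≤ 2)]
        rw [inv_inv]
        ring
      have hsqpos : (0:ℝ) < s^(-q) := Real.rpow_pos_of_pos hs _
      have hcast1 : (bigCount f s n x : ℝ) ≤ 2*(Dmax g s : ℝ) + 1 := by exact_mod_cast c1
      have hcast2 : (Dmax g s : ℝ) ≤ 2*((Nsep (treeDist g) (Set.Icc 0 1) (s/2) : ℕ) : ℝ) := by
        exact_mod_cast c2
      calc (bigCount f s n x : ℝ) ≤ 2*(Dmax g s : ℝ) + 1 := hcast1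
        _ ≤ 4*((Nsep (treeDist g) (Set.Icc 0 1) (s/2) : ℕ) : ℝ) + 1 := by linarith
        _ ≤ 4*((s/2)^(-q) + (N0:ℝ)) + 1 := by linarith
        _ = 4*(2:ℝ)^(q:ℝ)*s^(-q) + (4*(N0:ℝ) + 1) := by rw [hs2]; ring
        _ ≤ A * s^(-q) + A := by
            rw [hAd]
            nlinarith
    obtain ⟨B, hB⟩ := multiscale_bound hq1 hqp hG1 hA1 hosc hcnt
    have hpv : pVar f p ≤ ENNReal.ofReal B := pVar_le_of_bound hB
    rw [htop] at hpv
    exact ENNReal.ofReal_ne_top (top_le_iff.1 hpv)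
  exact le_antisymm hle1 hge

end
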